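/- arXiv:2411.03909 — 4 statements merged into one kernel-verified Lean document; each statement's English description precedes it below -/
import Mathlib

section
/- Let A ∈ ℝ^{n×n}, B ∈ ℝ^{n×m}, C ∈ ℝ^{p×n}, and let u, x, y satisfy x(t+1) = A·x(t) + B·u(t) and y(t) = C·x(t) for all t. Fix L ≥ 1 and suppose 𝒪_Lᵀ𝒪_L is invertible (i.e., the extended observability matrix 𝒪_L has full column rank n), and set 𝒪_L† = (𝒪_Lᵀ𝒪_L)⁻¹𝒪_Lᵀ. Then for every t ≥ L, x(t) = (𝒞_L − A^L·𝒪_L†·𝒯_L)·u_{t,L} + A^L·𝒪_L†·y_{t,L}, where u_{t,L} = (u(t−1), …, u(t−L)) ∈ ℝ^{mL} and y_{t,L} = (y(t−1), …, y(t−L)) ∈ ℝ^{pL} are the stacked past inputs and outputs ordered with the most recent sample first. -/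
open Matrix Finset

/-- Extended observability matrix `𝒪_L = [C A^{L−1}; …; C A; C]`
(block row `i` is `C * A ^ (L - 1 - i)`). -/
def obsMat (n p L : ℕ) (A : Matrix (Fin n) (Fin n) ℝ) (C : Matrix (Fin p) (Fin n) ℝ) :
    Matrix (Fin L × Fin p) (Fin n) ℝ :=
  fun ia j => (C * A ^ (L - 1 - (ia.1 : ℕ))) ia.2 j

/-- Controllability matrix `𝒞_L = [B, A B, …, A^{L−1} B]`. -/
def ctrbMat (n m L : ℕ) (A : Matrix (Fin n) (Fin n) ℝ) (B : Matrix (Fin n) (Fin m) ℝ) :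
    Matrix (Fin n) (Fin L × Fin m) ℝ :=
  fun i jb => (A ^ (jb.1 : ℕ) * B) i jb.2

/-- Impulse-response Toeplitz matrix `𝒯_L`: block `(i,j)` equals `C A^{j−i−1} B` if `j > i`
and `0` otherwise (`0`-indexed blocks). -/
def toepMat (n m p L : ℕ) (A : Matrix (Fin n) (Fin n) ℝ) (B : Matrix (Fin n) (Fin m) ℝ)
    (C : Matrix (Fin p) (Fin n) ℝ) :
    Matrix (Fin L × Fin p) (Fin L × Fin m) ℝ :=
  fun ia jb =>
    if (ia.1 : ℕ) < (jb.1 : ℕ) then (C * A ^ ((jb.1 : ℕ) - (ia.1 : ℕ) - 1) * B) ia.2 jb.2 else 0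

/-- Stacked past inputs `u_{t,L} = (u(t−1), …, u(t−L))`, most recent first. -/
def uStack (m L : ℕ) (u : ℕ → Fin m → ℝ) (t : ℕ) : Fin L × Fin m → ℝ :=
  fun jb => u (t - 1 - (jb.1 : ℕ)) jb.2

/-- Stacked past outputs `y_{t,L} = (y(t−1), …, y(t−L))`, most recent first. -/
def yStack (p L : ℕ) (y : ℕ → Fin p → ℝ) (t : ℕ) : Fin L × Fin p → ℝ :=
  fun jc => y (t - 1 - (jc.1 : ℕ)) jc.2

private lemma mulVec_finset_sum {ι : Type*} {k l : ℕ} (A : Matrix (Fin k) (Fin l) ℝ)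
    (s : Finset ι) (f : ι → Fin l → ℝ) :
    A.mulVec (∑ j ∈ s, f j) = ∑ j ∈ s, A.mulVec (f j) := by
  funext i
  simp only [Matrix.mulVec, dotProduct, Finset.sum_apply, Finset.mul_sum]
  rw [Finset.sum_comm]

theorem state_from_past_input_output
    (n m p L : ℕ) (hL : 1 ≤ L)
    (A : Matrix (Fin n) (Fin n) ℝ) (B : Matrix (Fin n) (Fin m) ℝ)
    (C : Matrix (Fin p) (Fin n) ℝ)
    (u : ℕ → Fin m → ℝ) (x : ℕ → Fin n → ℝ) (y : ℕ → Fin p → ℝ)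
    (hdyn : ∀ t : ℕ, x (t + 1) = A.mulVec (x t) + B.mulVec (u t))
    (hout : ∀ t : ℕ, y t = C.mulVec (x t))
    (hObs : IsUnit ((obsMat n p L A C)ᵀ * obsMat n p L A C)) :
    ∀ t : ℕ, L ≤ t →
      x t =
        (ctrbMat n m L A B -
            A ^ L * (((obsMat n p L A C)ᵀ * obsMat n p L A C)⁻¹ * (obsMat n p L A C)ᵀ) *
              toepMat n m p L A B C).mulVec (uStack m L u t) +
          (A ^ L * (((obsMat n p L A C)ᵀ * obsMat n p L A C)⁻¹ * (obsMat n p L A C)ᵀ)).mulVec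
            (yStack p L y t) := by
  intro t ht
  obtain ⟨s, rfl⟩ : ∃ s, t = s + L := ⟨t - L, by omega⟩
  set O := obsMat n p L A C with hOdef
  set P := ((Oᵀ * O)⁻¹ * Oᵀ) with hPdef
  set T := toepMat n m p L A B C with hTdef
  set U := uStack m L u (s + L) with hUdef
  -- pseudoinverse property
  have hPO : P * O = 1 := by
    rw [hPdef, Matrix.mul_assoc,
      Matrix.nonsing_inv_mul _ ((Matrix.isUnit_iff_isUnit_det _).mp hObs)]
  -- state evolution
  have hstate : ∀ k : ℕ, x (s + k) = (A ^ k).mulVec (x s)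
      + ∑ j ∈ Finset.range k, (A ^ j * B).mulVec (u (s + k - 1 - j)) := by
    intro k
    induction k with
    | zero => simp [Matrix.one_mulVec]
    | succ k ih =>
      have h1 : s + (k + 1) = (s + k) + 1 := by omega
      rw [h1, hdyn, ih, Matrix.mulVec_add, mulVec_finset_sum, Finset.sum_range_succ']
      have e2 : ∀ j ∈ Finset.range k,
          A.mulVec ((A ^ j * B).mulVec (u (s + k - 1 - j)))
            = (A ^ (j + 1) * B).mulVec (u (s + k + 1 - 1 - (j + 1))) := by
        intro j hj
        have e : s + k + 1 - 1 - (j + 1) = s + k - 1 - j := by omega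
        rw [e, Matrix.mulVec_mulVec, ← Matrix.mul_assoc, ← pow_succ']
      rw [Finset.sum_congr rfl e2, Matrix.mulVec_mulVec, ← pow_succ']
      have e0 : s + k + 1 - 1 - 0 = s + k := by omega
      rw [e0, pow_zero, Matrix.one_mul]
      abel
  -- controllability identity
  have hctrb : (ctrbMat n m L A B).mulVec U
      = ∑ j ∈ Finset.range L, (A ^ j * B).mulVec (u (s + L - 1 - j)) := by
    funext i
    rw [Finset.sum_apply,
      ← Fin.sum_univ_eq_sum_range (fun j => ((A ^ j * B).mulVec (u (s + L - 1 - j))) i) L]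
    show ∑ jb : Fin L × Fin m, ctrbMat n m L A B i jb * U jb = _
    rw [Fintype.sum_prod_type]
    rfl
  -- output stack identity
  have hY : yStack p L y (s + L) = O.mulVec (x s) + T.mulVec U := by
    funext ia
    obtain ⟨i, a⟩ := ia
    have hiL : (i : ℕ) < L := i.isLt
    have hk : (s + L) - 1 - (i : ℕ) = s + (L - 1 - (i : ℕ)) := by omega
    show y ((s + L) - 1 - (i : ℕ)) a = _
    rw [hk, hout, hstate (L - 1 - (i : ℕ)), Matrix.mulVec_add, mulVec_finset_sum]
    have hobs : (C.mulVec ((A ^ (L - 1 - (i : ℕ))).mulVec (x s))) a = O.mulVec (x s) (i, a) := by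
      rw [Matrix.mulVec_mulVec]
      rfl
    have htoep : (∑ j ∈ Finset.range (L - 1 - (i : ℕ)),
        (C.mulVec ((A ^ j * B).mulVec (u (s + (L - 1 - (i : ℕ)) - 1 - j)))) a)
          = T.mulVec U (i, a) := by
      have step1 : T.mulVec U (i, a)
          = ∑ j : Fin L, ∑ b : Fin m,
              (if (i : ℕ) < (j : ℕ) then (C * A ^ ((j : ℕ) - (i : ℕ) - 1) * B) a b else 0)
                * u ((s + L) - 1 - (j : ℕ)) b := by
        show ∑ jb : Fin L × Fin m, T (i, a) jb * U jb = _
        rw [Fintype.sum_prod_type]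
        rfl
      rw [step1]
      have step2 : ∀ j : Fin L, (∑ b : Fin m,
          (if (i : ℕ) < (j : ℕ) then (C * A ^ ((j : ℕ) - (i : ℕ) - 1) * B) a b else 0)
            * u ((s + L) - 1 - (j : ℕ)) b)
          = if (i : ℕ) < (j : ℕ) then
              ((C * A ^ ((j : ℕ) - (i : ℕ) - 1) * B).mulVec (u ((s + L) - 1 - (j : ℕ)))) a
            else 0 := by
        intro j
        split_ifs with h <;> simp [Matrix.mulVec, dotProduct]
      rw [Finset.sum_congr rfl (fun j _ => step2 j)]
      rw [Fin.sum_univ_eq_sum_range (fun j => if (i : ℕ) < j then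
          ((C * A ^ (j - (i : ℕ) - 1) * B).mulVec (u ((s + L) - 1 - j))) a else 0) L]
      rw [← Finset.sum_filter]
      have hfil : Finset.filter (fun j => (i : ℕ) < j) (Finset.range L)
          = Finset.Ico ((i : ℕ) + 1) L := by
        ext j
        simp only [Finset.mem_filter, Finset.mem_range, Finset.mem_Ico]
        omega
      rw [hfil, Finset.sum_Ico_eq_sum_range]
      have hkk : L - ((i : ℕ) + 1) = L - 1 - (i : ℕ) := by omega
      rw [hkk]
      apply Finset.sum_congr rfl
      intro j hj
      simp only [Finset.mem_range] at hj
      have he : (i : ℕ) + 1 + j - (i : ℕ) - 1 = j := by omega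
      have hi2 : (s + L) - 1 - ((i : ℕ) + 1 + j) = s + (L - 1 - (i : ℕ)) - 1 - j := by omega
      rw [he, hi2, Matrix.mulVec_mulVec, ← Matrix.mul_assoc]
    simp only [Pi.add_apply, Finset.sum_apply]
    rw [hobs, htoep]
  -- final assembly
  rw [Matrix.sub_mulVec, hY, Matrix.mulVec_add, Matrix.mulVec_mulVec, Matrix.mulVec_mulVec,
    Matrix.mul_assoc (A ^ L) P O, hPO, Matrix.mul_one]
  rw [hstate L, hctrb]
  abel
end

section
/- Let A ∈ ℝ^{n×n}, B ∈ ℝ^{n×m}, C ∈ ℝ^{p×n}, and let u, x, y satisfy x(t+1) = A·x(t) + B·u(t) and y(t) = C·x(t) for all t. Fix L ≥ 1, suppose 𝒪_Lᵀ𝒪_L is invertible, set 𝒪_L† = (𝒪_Lᵀ𝒪_L)⁻¹𝒪_Lᵀ, and define S = [C·(𝒞_L − A^L·𝒪_L†·𝒯_L), C·A^L·𝒪_L†] ∈ ℝ^{p×(mL+pL)}. Then for every t ≥ L, y(t) = S·ξ_t, where ξ_t = (u_{t,L}, y_{t,L}) ∈ ℝ^{mL+pL} is the concatenation of the stacked past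 inputs and outputs. -/
open Matrix Finset

/-- The matrix `S = [C(𝒞_L − A^L 𝒪_L† 𝒯_L), C A^L 𝒪_L†]`. -/
noncomputable def Smat (n m p L : ℕ) (A : Matrix (Fin n) (Fin n) ℝ) (B : Matrix (Fin n) (Fin m) ℝ)
    (C : Matrix (Fin p) (Fin n) ℝ) :
    Matrix (Fin p) ((Fin L × Fin m) ⊕ (Fin L × Fin p)) ℝ :=
  Matrix.fromCols
    (C * (ctrbMat n m L A B -
      A ^ L * (((obsMat n p L A C)ᵀ * obsMat n p L A C)⁻¹ * (obsMat n p L A C)ᵀ) *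
        toepMat n m p L A B C))
    (C * A ^ L * (((obsMat n p L A C)ᵀ * obsMat n p L A C)⁻¹ * (obsMat n p L A C)ᵀ))

/-- The non-minimal state `ξ_t = (u_{t,L}, y_{t,L})`. -/
def xiState (m p L : ℕ) (u : ℕ → Fin m → ℝ) (y : ℕ → Fin p → ℝ) (t : ℕ) :
    (Fin L × Fin m) ⊕ (Fin L × Fin p) → ℝ :=
  Sum.elim (uStack m L u t) (yStack p L y t)

lemma mulVec_sum' {ι n' m' : Type*} [Fintype n'] (M : Matrix m' n' ℝ) (s : Finset ι)
    (v : ι → n' → ℝ) : M.mulVec (∑ i ∈ s, v i) = ∑ i ∈ s, M.mulVec (v i) := by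
  simpa only [Matrix.mulVecLin_apply] using map_sum (Matrix.mulVecLin M) v s

lemma state_evol (n m : ℕ) (A : Matrix (Fin n) (Fin n) ℝ) (B : Matrix (Fin n) (Fin m) ℝ)
    (u : ℕ → Fin m → ℝ) (x : ℕ → Fin n → ℝ)
    (hdyn : ∀ t : ℕ, x (t + 1) = A.mulVec (x t) + B.mulVec (u t)) (s : ℕ) :
    ∀ k : ℕ, x (s + k) = (A ^ k).mulVec (x s)
      + ∑ j ∈ Finset.range k, (A ^ j * B).mulVec (u (s + k - 1 - j)) := by
  intro k
  induction k with
  | zero => simp [Matrix.one_mulVec]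
  | succ k ih =>
    have h1 : s + (k + 1) = (s + k) + 1 := by omega
    rw [h1, hdyn, ih, Finset.sum_range_succ']
    rw [Matrix.mulVec_add, mulVec_sum']
    simp only [Matrix.mulVec_mulVec]
    have e1 : A * A ^ k = A ^ (k + 1) := by rw [pow_succ']
    rw [e1]
    have e3 : ∀ j ∈ Finset.range k,
        (A * (A ^ j * B)).mulVec (u (s + k - 1 - j))
        = (A ^ (j + 1) * B).mulVec (u (s + (k + 1) - 1 - (j + 1))) := by
      intro j hj
      rw [← Matrix.mul_assoc, ← pow_succ',
        show s + (k + 1) - 1 - (j + 1) = s + k - 1 - j from by omega]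
    rw [Finset.sum_congr rfl e3]
    have e4 : (A ^ 0 * B).mulVec (u (s + (k + 1) - 1 - 0)) = B.mulVec (u (s + k)) := by
      simp only [pow_zero, Matrix.one_mul]
      rw [show s + (k + 1) - 1 - 0 = s + k from by omega]
    rw [← e4]
    abel

theorem output_from_past_input_output
    (n m p L : ℕ) (hL : 1 ≤ L)
    (A : Matrix (Fin n) (Fin n) ℝ) (B : Matrix (Fin n) (Fin m) ℝ)
    (C : Matrix (Fin p) (Fin n) ℝ)
    (u : ℕ → Fin m → ℝ) (x : ℕ → Fin n → ℝ) (y : ℕ → Fin p → ℝ)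
    (hdyn : ∀ t : ℕ, x (t + 1) = A.mulVec (x t) + B.mulVec (u t))
    (hout : ∀ t : ℕ, y t = C.mulVec (x t))
    (hObs : IsUnit ((obsMat n p L A C)ᵀ * obsMat n p L A C)) :
    ∀ t : ℕ, L ≤ t →
      y t = (Smat n m p L A B C).mulVec (xiState m p L u y t) := by
  intro t ht
  have htL : t - L + L = t := by omega
  have hPO : (((obsMat n p L A C)ᵀ * obsMat n p L A C)⁻¹ * (obsMat n p L A C)ᵀ)
      * obsMat n p L A C = 1 := by
    rw [Matrix.mul_assoc,
      Matrix.nonsing_inv_mul _ ((Matrix.isUnit_iff_isUnit_det _).mp hObs)]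
  -- output stack identity
  have hyS : yStack p L y t =
      (obsMat n p L A C).mulVec (x (t - L))
        + (toepMat n m p L A B C).mulVec (uStack m L u t) := by
    funext ia
    obtain ⟨i, a⟩ := ia
    have hi : (i : ℕ) < L := i.2
    have hk : t - L + (L - 1 - (i : ℕ)) = t - 1 - (i : ℕ) := by omega
    have hx1 := state_evol n m A B u x hdyn (t - L) (L - 1 - (i : ℕ))
    rw [hk] at hx1
    show y (t - 1 - (i : ℕ)) a = _
    rw [hout, hx1]
    have hobs : (obsMat n p L A C).mulVec (x (t - L)) (i, a)
        = (C * A ^ (L - 1 - (i : ℕ))).mulVec (x (t - L)) a := by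
      simp [obsMat, Matrix.mulVec, dotProduct]
    have htoep : (toepMat n m p L A B C).mulVec (uStack m L u t) (i, a)
        = ∑ j ∈ Finset.range (L - 1 - (i : ℕ)),
            (C * A ^ j * B).mulVec (u (t - 1 - (i : ℕ) - 1 - j)) a := by
      rw [Matrix.mulVec, dotProduct, Fintype.sum_prod_type]
      rw [Finset.sum_congr rfl (fun (j : Fin L) _ => show
          ∑ b : Fin m, toepMat n m p L A B C (i, a) (j, b) * uStack m L u t (j, b)
          = if (i : ℕ) < (j : ℕ) then
              (C * A ^ ((j : ℕ) - (i : ℕ) - 1) * B).mulVec (u (t - 1 - (j : ℕ))) a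
            else 0 by
        by_cases h : (i : ℕ) < (j : ℕ) <;>
          simp [toepMat, uStack, h, Matrix.mulVec, dotProduct])]
      rw [Fin.sum_univ_eq_sum_range
        (fun j => if (i : ℕ) < j then
          (C * A ^ (j - (i : ℕ) - 1) * B).mulVec (u (t - 1 - j)) a else 0)]
      rw [Finset.range_eq_Ico,
        ← Finset.sum_Ico_consecutive _ (Nat.zero_le ((i : ℕ) + 1)) hi]
      have hz : ∑ j ∈ Finset.Ico 0 ((i : ℕ) + 1),
          (if (i : ℕ) < j then
            (C * A ^ (j - (i : ℕ) - 1) * B).mulVec (u (t - 1 - j)) a else 0) = 0 := by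
        apply Finset.sum_eq_zero
        intro j hj
        simp only [Finset.mem_Ico] at hj
        rw [if_neg (by omega)]
      rw [hz, zero_add, Finset.sum_Ico_eq_sum_range]
      have hr : L - ((i : ℕ) + 1) = L - 1 - (i : ℕ) := by omega
      rw [hr]
      apply Finset.sum_congr rfl
      intro j hj
      simp only [Finset.mem_range] at hj
      rw [if_pos (by omega)]
      have he1 : (i : ℕ) + 1 + j - (i : ℕ) - 1 = j := by omega
      have he2 : t - 1 - ((i : ℕ) + 1 + j) = t - 1 - (i : ℕ) - 1 - j := by omega
      rw [he1, he2]
    rw [Pi.add_apply, hobs, htoep]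
    rw [Matrix.mulVec_add, Pi.add_apply]
    congr 1
    · rw [← Matrix.mulVec_mulVec]
    · rw [mulVec_sum', Finset.sum_apply]
      apply Finset.sum_congr rfl
      intro j hj
      rw [Matrix.mulVec_mulVec, ← Matrix.mul_assoc]
  -- controllability identity
  have hcS : (ctrbMat n m L A B).mulVec (uStack m L u t)
      = ∑ j ∈ Finset.range L, (A ^ j * B).mulVec (u (t - 1 - j)) := by
    funext i
    rw [Matrix.mulVec, dotProduct, Fintype.sum_prod_type, Finset.sum_apply]
    rw [← Fin.sum_univ_eq_sum_range (fun j => ((A ^ j * B).mulVec (u (t - 1 - j))) i) L]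
    apply Finset.sum_congr rfl
    intro j _
    simp [ctrbMat, uStack, Matrix.mulVec, dotProduct]
  -- recover x (t - L)
  have hx0 : x (t - L) = (((obsMat n p L A C)ᵀ * obsMat n p L A C)⁻¹
      * (obsMat n p L A C)ᵀ).mulVec (yStack p L y t
        - (toepMat n m p L A B C).mulVec (uStack m L u t)) := by
    rw [hyS, add_sub_cancel_right, Matrix.mulVec_mulVec, hPO, Matrix.one_mulVec]
  -- state at time t
  have hxt : x t = (A ^ L).mulVec (x (t - L))
      + ∑ j ∈ Finset.range L, (A ^ j * B).mulVec (u (t - 1 - j)) := by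
    have := state_evol n m A B u x hdyn (t - L) L
    rw [htL] at this
    exact this
  rw [hout, hxt, ← hcS, hx0]
  show _ = (Matrix.fromCols _ _).mulVec (Sum.elim _ _)
  rw [Matrix.fromCols_mulVec_sumElim]
  simp only [Matrix.mulVec_sub, Matrix.mulVec_add, Matrix.mulVec_mulVec,
    Matrix.sub_mulVec, Matrix.mul_sub, Matrix.mul_assoc]
  abel
end

section
/- (Controllable non-minimal realization.) Let A ∈ ℝ^{n×n}, B ∈ ℝ^{n×m}, C ∈ ℝ^{p×n}. Suppose the pair (A,B) is controllable, i.e., rank [B, AB, …, A^{n−1}B] = n, and fix L ≥ 1 such that the extended observability matrix 𝒪_L has full column rank n. Let r = mL + n. Then there exist a matrix T ∈ ℝ^{r×(mL+pL)} of full row rank r and matrices A_z ∈ ℝ^{r×r}, B_z ∈ ℝ^{r×m}, C_z ∈ ℝ^{p×r} with rank [B_z, A_z B_z, …, A_z^{r−1} B_z] = r (controllability of (A_z,B_z)), such that for every trajectory u, x, y satisfying x(t+1) = A·x(t) + B·u(t) and y(t) = C·x(t) for all t, the reduced state z_t := T·ξ_t satisfies z_{t+1} = A_z·z_t + B_z·u(t)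 and y(t) = C_z·z_t for all t ≥ L. -/
open Matrix Finset

/-- The controllability matrix `[B, A B, …, A^{d−1} B]` of a pair `(A, B)` with `d` states. -/
def ctrbPairMat (d m : ℕ) (A : Matrix (Fin d) (Fin d) ℝ) (B : Matrix (Fin d) (Fin m) ℝ) :
    Matrix (Fin d) (Fin d × Fin m) ℝ :=
  fun i kb => (A ^ (kb.1 : ℕ) * B) i kb.2

-- generic delta-sum helpers
lemma sum_delta_mul {ι : Type*} [Fintype ι] (P : ι → Prop) [DecidablePred P]
    (g f : ι → ℝ) (j₀ : ι) (h₀ : P j₀) (huniq : ∀ j, P j → j = j₀) :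
    ∑ j, (if P j then g j else 0) * f j = g j₀ * f j₀ := by
  rw [Finset.sum_eq_single j₀]
  · rw [if_pos h₀]
  · intro j _ hne
    rw [if_neg (fun h => hne (huniq j h)), zero_mul]
  · intro h; exact absurd (Finset.mem_univ j₀) h

lemma sum_delta_zero {ι : Type*} [Fintype ι] (P : ι → Prop) [DecidablePred P]
    (g f : ι → ℝ) (h : ∀ j, ¬ P j) :
    ∑ j, (if P j then g j else 0) * f j = 0 :=
  Finset.sum_eq_zero fun j _ => by rw [if_neg (h j), zero_mul]

-- rank lemmas
lemma rank_eq_of_right_inv {r : ℕ} {ι : Type*} [Fintype ι]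
    (M : Matrix (Fin r) ι ℝ) (N : Matrix ι (Fin r) ℝ) (h : M * N = 1) :
    M.rank = r := by
  refine le_antisymm (le_trans (Matrix.rank_le_card_height M) (by simp)) ?_
  have h1 : ((1 : Matrix (Fin r) (Fin r) ℝ)).rank = r := by
    rw [Matrix.rank_one]; simp
  calc r = (M * N).rank := by rw [h, h1]
    _ ≤ M.rank := Matrix.rank_mul_le_left M N

lemma isUnit_of_rank_eq {d : ℕ} (G : Matrix (Fin d) (Fin d) ℝ) (h : G.rank = d) :
    IsUnit G := by
  rw [← Matrix.mulVec_surjective_iff_isUnit]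
  have hr : LinearMap.range G.mulVecLin = ⊤ := by
    apply Submodule.eq_top_of_finrank_eq
    rw [← Matrix.rank, h]
    simp [Module.finrank_pi]
  intro v
  obtain ⟨w, hw⟩ := LinearMap.range_eq_top.mp hr v
  exact ⟨w, hw⟩

lemma exists_left_inverse_obs {n p L : ℕ} (A : Matrix (Fin n) (Fin n) ℝ)
    (C : Matrix (Fin p) (Fin n) ℝ) (hobs : (obsMat n p L A C).rank = n) :
    ∃ P : Matrix (Fin n) (Fin L × Fin p) ℝ, P * obsMat n p L A C = 1 := by
  set O := obsMat n p L A C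
  have hG : (Oᵀ * O).rank = n := by rw [Matrix.rank_transpose_mul_self, hobs]
  have hU : IsUnit (Oᵀ * O) := isUnit_of_rank_eq _ hG
  refine ⟨(Oᵀ * O)⁻¹ * Oᵀ, ?_⟩
  rw [Matrix.mul_assoc, Matrix.nonsing_inv_mul _ ((Matrix.isUnit_iff_isUnit_det _).mp hU)]

lemma exists_right_inverse_ctrb {n m : ℕ} (A : Matrix (Fin n) (Fin n) ℝ)
    (B : Matrix (Fin n) (Fin m) ℝ) (hctrb : (ctrbPairMat n m A B).rank = n) :
    ∃ N : Matrix (Fin n × Fin m) (Fin n) ℝ, ctrbPairMat n m A B * N = 1 := by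
  set M := ctrbPairMat n m A B
  have hG : (M * Mᵀ).rank = n := by rw [Matrix.rank_self_mul_transpose, hctrb]
  have hU : IsUnit (M * Mᵀ) := isUnit_of_rank_eq _ hG
  refine ⟨Mᵀ * (M * Mᵀ)⁻¹, ?_⟩
  rw [← Matrix.mul_assoc, Matrix.mul_nonsing_inv _ ((Matrix.isUnit_iff_isUnit_det _).mp hU)]



/-- Toeplitz matrix of Markov parameters. -/
def toepM (n m p L : ℕ) (A : Matrix (Fin n) (Fin n) ℝ) (B : Matrix (Fin n) (Fin m) ℝ)
    (C : Matrix (Fin p) (Fin n) ℝ) : Matrix (Fin L × Fin p) (Fin L × Fin m) ℝ :=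
  fun ic kb => if (ic.1 : ℕ) < (kb.1 : ℕ) then
    (C * A ^ ((kb.1 : ℕ) - (ic.1 : ℕ) - 1) * B) ic.2 kb.2 else 0

lemma mulVec_sum {a b : ℕ} (M : Matrix (Fin a) (Fin b) ℝ) (s : Finset ℕ) (v : ℕ → Fin b → ℝ) :
    M.mulVec (∑ j ∈ s, v j) = ∑ j ∈ s, M.mulVec (v j) := by
  ext i
  simp [Matrix.mulVec, dotProduct, Finset.mul_sum]
  rw [Finset.sum_comm]

lemma state_expand {n m : ℕ} (A : Matrix (Fin n) (Fin n) ℝ) (B : Matrix (Fin n) (Fin m) ℝ)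
    (u : ℕ → Fin m → ℝ) (x : ℕ → Fin n → ℝ)
    (hx : ∀ t, x (t + 1) = A.mulVec (x t) + B.mulVec (u t)) (s : ℕ) :
    ∀ k, x (s + k) = (A ^ k).mulVec (x s)
      + ∑ j ∈ Finset.range k, (A ^ j * B).mulVec (u (s + k - 1 - j)) := by
  intro k
  induction k with
  | zero => simp [Matrix.one_mulVec]
  | succ k ih =>
    have e1 : s + (k + 1) = (s + k) + 1 := rfl
    rw [e1, hx (s + k), ih, Matrix.mulVec_add, mulVec_sum, Matrix.mulVec_mulVec]
    have hA : A * A ^ k = A ^ (k + 1) := (pow_succ' A k).symm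
    rw [hA]
    have enorm : ∀ j, s + k + 1 - 1 - j = s + k - j := fun j => by omega
    simp only [enorm]
    rw [Finset.sum_range_succ']
    have hterm : ∀ j ∈ Finset.range k,
        A.mulVec ((A ^ j * B).mulVec (u (s + k - 1 - j)))
          = (A ^ (j + 1) * B).mulVec (u (s + k - (j + 1))) := by
      intro j _
      rw [Matrix.mulVec_mulVec, ← Matrix.mul_assoc, ← pow_succ']
      have e2 : s + k - 1 - j = s + k - (j + 1) := by omega
      rw [e2]
    rw [Finset.sum_congr rfl hterm]
    have h0 : (A ^ 0 * B).mulVec (u (s + k - 0)) = B.mulVec (u (s + k)) := by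
      simp
    rw [h0]
    abel



lemma toep_apply {n m p L : ℕ} (A : Matrix (Fin n) (Fin n) ℝ) (B : Matrix (Fin n) (Fin m) ℝ)
    (C : Matrix (Fin p) (Fin n) ℝ) (u : ℕ → Fin m → ℝ) (t : ℕ) (i : Fin L) (c : Fin p) :
    ((toepM n m p L A B C).mulVec (uStack m L u t)) (i, c)
      = ∑ k ∈ Finset.range L,
          if (i : ℕ) < k then ((C * A ^ (k - i - 1) * B).mulVec (u (t - 1 - k))) c else 0 := by
  rw [← Fin.sum_univ_eq_sum_range]
  simp only [Matrix.mulVec, dotProduct, toepM, uStack, Fintype.sum_prod_type, ite_mul,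
    zero_mul]
  apply Finset.sum_congr rfl
  intro k _
  by_cases h : (i : ℕ) < (k : ℕ)
  · simp [h, Matrix.mulVec, dotProduct]
  · simp [h]

lemma ystack_decomp {n m p L : ℕ} (A : Matrix (Fin n) (Fin n) ℝ) (B : Matrix (Fin n) (Fin m) ℝ)
    (C : Matrix (Fin p) (Fin n) ℝ) (u : ℕ → Fin m → ℝ) (x : ℕ → Fin n → ℝ) (y : ℕ → Fin p → ℝ)
    (hx : ∀ t, x (t + 1) = A.mulVec (x t) + B.mulVec (u t))
    (hy : ∀ t, y t = C.mulVec (x t)) (t : ℕ) (ht : L ≤ t) :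
    yStack p L y t = (obsMat n p L A C).mulVec (x (t - L))
      + (toepM n m p L A B C).mulVec (uStack m L u t) := by
  funext ic
  obtain ⟨i, c⟩ := ic
  have hiL : (i : ℕ) < L := i.isLt
  have hx1 : t - 1 - (i : ℕ) = (t - L) + (L - 1 - (i : ℕ)) := by omega
  show y (t - 1 - (i : ℕ)) c = _
  rw [hy, hx1, state_expand A B u x hx (t - L) (L - 1 - (i : ℕ)), Matrix.mulVec_add,
    Matrix.mulVec_mulVec, mulVec_sum]
  have hgoal : ∀ v w : Fin L × Fin p → ℝ, (v + w) (i, c) = v (i, c) + w (i, c) := fun _ _ => rfl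
  rw [hgoal, toep_apply]
  have hobs : ((obsMat n p L A C).mulVec (x (t - L))) (i, c)
      = ((C * A ^ (L - 1 - (i : ℕ))).mulVec (x (t - L))) c := rfl
  rw [hobs]
  rw [Pi.add_apply, Finset.sum_apply]
  congr 1
  have hfilter : (Finset.range L).filter (fun k => (i : ℕ) < k) = Finset.Ico ((i : ℕ) + 1) L := by
    ext a
    simp [Finset.mem_filter, Finset.mem_Ico]
    omega
  rw [← Finset.sum_filter, hfilter, Finset.sum_Ico_eq_sum_range]
  have hcard : L - ((i : ℕ) + 1) = L - 1 - (i : ℕ) := by omega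
  rw [hcard]
  apply Finset.sum_congr rfl
  intro j hj
  rw [Finset.mem_range] at hj
  have e1 : (i : ℕ) + 1 + j - (i : ℕ) - 1 = j := by omega
  have e2 : t - 1 - ((i : ℕ) + 1 + j) = t - L + (L - 1 - (i : ℕ)) - 1 - j := by omega
  rw [e1, e2, Matrix.mulVec_mulVec, ← Matrix.mul_assoc]





/-- The "A" matrix of the non-minimal realization, on sum-type indices. -/
def AzK (n m L : ℕ) (A : Matrix (Fin n) (Fin n) ℝ) (B : Matrix (Fin n) (Fin m) ℝ) :
    Matrix ((Fin L × Fin m) ⊕ Fin n) ((Fin L × Fin m) ⊕ Fin n) ℝ :=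
  Matrix.fromBlocks
    (fun ib jb => if (ib.1 : ℕ) = (jb.1 : ℕ) + 1 ∧ ib.2 = jb.2 then 1 else 0) 0
    (fun q jb => if (jb.1 : ℕ) = L - 1 then B q jb.2 else 0) A

/-- The "B" matrix of the non-minimal realization. -/
def BzK (n m L : ℕ) : Matrix ((Fin L × Fin m) ⊕ Fin n) (Fin m) ℝ :=
  fun k c => Sum.elim
    (fun ib : Fin L × Fin m => if (ib.1 : ℕ) = 0 ∧ ib.2 = c then (1 : ℝ) else 0)
    (fun _ => 0) k

/-- Predicted value of `AzK ^ k * BzK`. -/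
def pwK (n m L : ℕ) (A : Matrix (Fin n) (Fin n) ℝ) (B : Matrix (Fin n) (Fin m) ℝ) (k : ℕ) :
    Matrix ((Fin L × Fin m) ⊕ Fin n) (Fin m) ℝ :=
  fun kk c => Sum.elim
    (fun ib : Fin L × Fin m => if (ib.1 : ℕ) = k ∧ ib.2 = c then (1 : ℝ) else 0)
    (fun q => if L ≤ k then (A ^ (k - L) * B) q c else 0) kk

lemma pow_mul_BzK {n m L : ℕ} (hL : 1 ≤ L) (A : Matrix (Fin n) (Fin n) ℝ)
    (B : Matrix (Fin n) (Fin m) ℝ) :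
    ∀ k, AzK n m L A B ^ k * BzK n m L = pwK n m L A B k := by
  intro k
  induction k with
  | zero =>
    rw [pow_zero, Matrix.one_mul]
    ext kk c
    cases kk with
    | inl ib => rfl
    | inr q =>
      show (0 : ℝ) = if L ≤ 0 then _ else 0
      rw [if_neg (by omega)]
  | succ k ih =>
    rw [pow_succ', Matrix.mul_assoc, ih]
    ext kk c
    rw [Matrix.mul_apply, Fintype.sum_sum_type]
    cases kk with
    | inl ib =>
      obtain ⟨i, b⟩ := ib
      have h2 : ∑ q : Fin n, AzK n m L A B (Sum.inl (i, b)) (Sum.inr q) * pwK n m L A B k (Sum.inr q) c = 0 := by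
        apply Finset.sum_eq_zero
        intro q _
        show (0 : Matrix (Fin L × Fin m) (Fin n) ℝ) (i, b) q * _ = 0
        rw [Matrix.zero_apply, zero_mul]
      rw [h2, add_zero]
      show (∑ jb : Fin L × Fin m,
        (if (i : ℕ) = (jb.1 : ℕ) + 1 ∧ b = jb.2 then (1:ℝ) else 0) *
          (if (jb.1 : ℕ) = k ∧ jb.2 = c then (1:ℝ) else 0)) =
        (if (i : ℕ) = k + 1 ∧ b = c then (1:ℝ) else 0)
      by_cases hi : (i : ℕ) = 0
      · rw [sum_delta_zero _ _ _ (fun jb h => by omega), if_neg (by omega)]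
      · have hlt : (i : ℕ) - 1 < L := by omega
        have h0 : (i : ℕ) = (((⟨(i : ℕ) - 1, hlt⟩ : Fin L), b).1 : ℕ) + 1 ∧ b = ((⟨(i : ℕ) - 1, hlt⟩ : Fin L), b).2 := by
          refine ⟨?_, rfl⟩
          show (i : ℕ) = (i : ℕ) - 1 + 1
          omega
        have huniq : ∀ jb : Fin L × Fin m, ((i : ℕ) = (jb.1 : ℕ) + 1 ∧ b = jb.2) →
            jb = ((⟨(i : ℕ) - 1, hlt⟩ : Fin L), b) := by
          intro jb hjb
          refine Prod.ext (Fin.ext ?_) hjb.2.symm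
          show (jb.1 : ℕ) = (i : ℕ) - 1
          have := hjb.1
          omega
        rw [sum_delta_mul _ _ _ ((⟨(i : ℕ) - 1, hlt⟩ : Fin L), b) h0 huniq, one_mul]
        show (if (i : ℕ) - 1 = k ∧ b = c then (1:ℝ) else 0) = _
        by_cases hb : b = c
        · by_cases hk : (i : ℕ) = k + 1
          · rw [if_pos ⟨by omega, hb⟩, if_pos ⟨hk, hb⟩]
          · rw [if_neg (fun hcon => hk (by omega)), if_neg (by tauto)]
        · rw [if_neg (by tauto), if_neg (by tauto)]
    | inr q =>
      have h1 : ∑ jb : Fin L × Fin m,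
          AzK n m L A B (Sum.inr q) (Sum.inl jb) * pwK n m L A B k (Sum.inl jb) c
          = if k = L - 1 then B q c else 0 := by
        show (∑ jb : Fin L × Fin m,
          (if (jb.1 : ℕ) = L - 1 then B q jb.2 else 0) *
            (if (jb.1 : ℕ) = k ∧ jb.2 = c then (1:ℝ) else 0)) = _
        by_cases hk : k = L - 1
        · subst hk
          rw [if_pos rfl]
          rw [Finset.sum_eq_single ((⟨L - 1, by omega⟩ : Fin L), c)]
          · simp
          · intro jb _ hne
            by_cases h2 : (jb.1 : ℕ) = L - 1 ∧ jb.2 = c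
            · exact absurd (Prod.ext (Fin.ext (by show (jb.1:ℕ) = L - 1; exact h2.1)) h2.2) hne
            · by_cases h1 : (jb.1 : ℕ) = L - 1
              · rw [if_neg h2, mul_zero]
              · rw [if_neg h1, zero_mul]
          · intro h; exact absurd (Finset.mem_univ _) h
        · rw [if_neg hk]
          apply Finset.sum_eq_zero
          intro jb _
          by_cases h1 : (jb.1 : ℕ) = L - 1
          · rw [if_neg (show ¬((jb.1 : ℕ) = k ∧ jb.2 = c) from
                fun hcon => hk (by have := hcon.1; omega)), mul_zero]
          · rw [if_neg h1, zero_mul]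
      have h2 : ∑ q' : Fin n,
          AzK n m L A B (Sum.inr q) (Sum.inr q') * pwK n m L A B k (Sum.inr q') c
          = if L ≤ k then (A * (A ^ (k - L) * B)) q c else 0 := by
        show (∑ q' : Fin n, A q q' * (if L ≤ k then (A ^ (k - L) * B) q' c else 0)) = _
        by_cases hLk : L ≤ k
        · rw [if_pos hLk, Matrix.mul_apply]
          apply Finset.sum_congr rfl
          intro q' _
          rw [if_pos hLk]
        · rw [if_neg hLk]
          apply Finset.sum_eq_zero
          intro q' _
          rw [if_neg hLk, mul_zero]
      rw [h1, h2]
      show _ = if L ≤ k + 1 then (A ^ (k + 1 - L) * B) q c else 0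
      by_cases hLk : L ≤ k
      · rw [if_neg (by omega), if_pos hLk, if_pos (by omega), zero_add,
          ← Matrix.mul_assoc, ← pow_succ']
        have he : k - L + 1 = k + 1 - L := by omega
        rw [he]
      · by_cases hk : k = L - 1
        · rw [if_pos hk, if_neg hLk, if_pos (by omega), add_zero]
          have : k + 1 - L = 0 := by omega
          rw [this, pow_zero, Matrix.one_mul]
        · rw [if_neg hk, if_neg hLk, if_neg (by omega), add_zero]

/-- Controllability matrix of `(AzK, BzK)` over sum-type row index. -/
def ctrbK (n m L r : ℕ) (A : Matrix (Fin n) (Fin n) ℝ) (B : Matrix (Fin n) (Fin m) ℝ) :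
    Matrix ((Fin L × Fin m) ⊕ Fin n) (Fin r × Fin m) ℝ :=
  fun k κc => pwK n m L A B (κc.1 : ℕ) k κc.2

/-- Right inverse of the controllability matrix. -/
def NK (n m L r : ℕ) (Nc : Matrix (Fin n × Fin m) (Fin n) ℝ) :
    Matrix (Fin r × Fin m) ((Fin L × Fin m) ⊕ Fin n) ℝ :=
  fun κc k => Sum.elim
    (fun ib : Fin L × Fin m => if (κc.1 : ℕ) = (ib.1 : ℕ) ∧ κc.2 = ib.2 then (1 : ℝ) else 0)
    (fun q => if h : L ≤ (κc.1 : ℕ) ∧ (κc.1 : ℕ) - L < n then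
        Nc (⟨(κc.1 : ℕ) - L, h.2⟩, κc.2) q else 0) k

lemma ctrbK_mul_NK {n m L : ℕ} (hL : 1 ≤ L) (hm : 1 ≤ m)
    (A : Matrix (Fin n) (Fin n) ℝ) (B : Matrix (Fin n) (Fin m) ℝ)
    (Nc : Matrix (Fin n × Fin m) (Fin n) ℝ) (hNc : ctrbPairMat n m A B * Nc = 1) :
    ctrbK n m L (m * L + n) A B * NK n m L (m * L + n) Nc = 1 := by
  have hLm : L ≤ m * L := by
    calc L = 1 * L := (one_mul L).symm
    _ ≤ m * L := Nat.mul_le_mul_right L hm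
  ext k k'
  rw [Matrix.mul_apply]
  cases k' with
  | inl ib =>
    obtain ⟨i, b⟩ := ib
    have hilt : (i : ℕ) < m * L + n := by have := i.isLt; omega
    rw [Finset.sum_eq_single ((⟨(i : ℕ), hilt⟩ : Fin (m * L + n)), b)]
    · have : NK n m L (m * L + n) Nc ((⟨(i : ℕ), hilt⟩ : Fin (m * L + n)), b) (Sum.inl (i, b))
          = 1 := by
        show (if (i : ℕ) = (i : ℕ) ∧ b = b then (1:ℝ) else 0) = 1
        rw [if_pos ⟨rfl, rfl⟩]
      rw [this, mul_one]
      show pwK n m L A B (i : ℕ) k b = _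
      cases k with
      | inl ib2 =>
        obtain ⟨i2, b2⟩ := ib2
        show (if (i2 : ℕ) = (i : ℕ) ∧ b2 = b then (1:ℝ) else 0) = _
        rw [Matrix.one_apply]
        by_cases h1 : (i2 : ℕ) = (i : ℕ)
        · by_cases h2 : b2 = b
          · rw [if_pos ⟨h1, h2⟩, if_pos (by rw [Fin.ext h1, h2])]
          · rw [if_neg (by tauto), if_neg (fun h => h2 (congrArg Prod.snd (Sum.inl.inj h)))]
        · rw [if_neg (by tauto),
            if_neg (fun h => h1 (congrArg (fun x : Fin L × Fin m => (x.1 : ℕ)) (Sum.inl.inj h)))]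
      | inr q =>
        show (if L ≤ (i : ℕ) then (A ^ ((i : ℕ) - L) * B) q b else 0) = _
        rw [if_neg (by have := i.isLt; omega), Matrix.one_apply,
          if_neg (by simp)]
    · intro κc _ hne
      have : ¬((κc.1 : ℕ) = (i : ℕ) ∧ κc.2 = b) := by
        intro hcon
        exact hne (Prod.ext (Fin.ext hcon.1) hcon.2)
      show _ * (if (κc.1 : ℕ) = (i : ℕ) ∧ κc.2 = b then (1:ℝ) else 0) = 0
      rw [if_neg this, mul_zero]
    · intro h; exact absurd (Finset.mem_univ _) h
  | inr q =>
    cases k with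
    | inl ib2 =>
      obtain ⟨i2, b2⟩ := ib2
      rw [Matrix.one_apply, if_neg (by simp)]
      apply Finset.sum_eq_zero
      intro κc _
      by_cases hd : L ≤ (κc.1 : ℕ) ∧ (κc.1 : ℕ) - L < n
      · have : ¬((i2 : ℕ) = (κc.1 : ℕ) ∧ b2 = κc.2) := by
          intro hcon
          have := i2.isLt
          omega
        show (if (i2 : ℕ) = (κc.1 : ℕ) ∧ b2 = κc.2 then (1:ℝ) else 0) * _ = 0
        rw [if_neg this, zero_mul]
      · show _ * (if h : L ≤ (κc.1 : ℕ) ∧ (κc.1 : ℕ) - L < n then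
            Nc (⟨(κc.1 : ℕ) - L, h.2⟩, κc.2) q else 0) = 0
        rw [dif_neg hd, mul_zero]
    | inr q2 =>
      set r := m * L + n with hr
      let F : ℕ → ℝ := fun κ => ∑ c : Fin m,
        (if L ≤ κ then (A ^ (κ - L) * B) q2 c else 0) *
          (if h : L ≤ κ ∧ κ - L < n then Nc (⟨κ - L, h.2⟩, c) q else 0)
      let G : ℕ → ℝ := fun j => if hj : j < n then
        ∑ c : Fin m, (A ^ j * B) q2 c * Nc (⟨j, hj⟩, c) q else 0
      have hstep1 : ∑ κc : Fin r × Fin m,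
          ctrbK n m L r A B (Sum.inr q2) κc * NK n m L r Nc κc (Sum.inr q)
            = ∑ κ ∈ Finset.range r, F κ := by
        rw [Fintype.sum_prod_type, ← Fin.sum_univ_eq_sum_range F]
        rfl
      have hstep2 : ∑ κ ∈ Finset.range r, F κ = ∑ κ ∈ Finset.Ico L (L + n), F κ := by
        symm
        apply Finset.sum_subset
        · intro a ha
          rw [Finset.mem_Ico] at ha
          rw [Finset.mem_range]
          omega
        · intro a _ hnot
          rw [Finset.mem_Ico] at hnot
          push_neg at hnot
          apply Finset.sum_eq_zero
          intro c _
          by_cases hLa : L ≤ a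
          · rw [dif_neg (fun hcon => by have := hnot hLa; omega), mul_zero]
          · rw [if_neg hLa, zero_mul]
      have hstep3 : ∑ κ ∈ Finset.Ico L (L + n), F κ = ∑ j ∈ Finset.range n, F (L + j) := by
        rw [Finset.sum_Ico_eq_sum_range]
        simp only [Nat.add_sub_cancel_left]
      have hstep4 : ∀ j ∈ Finset.range n, F (L + j) = G j := by
        intro j hj
        rw [Finset.mem_range] at hj
        have e1 : L + j - L = j := by omega
        show (∑ c : Fin m,
          (if L ≤ L + j then (A ^ (L + j - L) * B) q2 c else 0) *
            (if h : L ≤ L + j ∧ L + j - L < n then Nc (⟨L + j - L, h.2⟩, c) q else 0)) = G j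
        simp only [e1]
        rw [show G j = ∑ c : Fin m, (A ^ j * B) q2 c * Nc (⟨j, hj⟩, c) q from dif_pos hj]
        apply Finset.sum_congr rfl
        intro c _
        rw [if_pos (by omega : L ≤ L + j), dif_pos (⟨by omega, hj⟩ : L ≤ L + j ∧ j < n)]
      have hstep5 : ∑ j ∈ Finset.range n, G j
          = (ctrbPairMat n m A B * Nc) q2 q := by
        rw [Matrix.mul_apply, ← Fin.sum_univ_eq_sum_range G, Fintype.sum_prod_type]
        apply Finset.sum_congr rfl
        intro j _
        show G (j : ℕ) = _
        rw [show G (j : ℕ) = ∑ c : Fin m, (A ^ (j : ℕ) * B) q2 c * Nc (⟨(j : ℕ), j.isLt⟩, c) q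
          from dif_pos j.isLt]
        apply Finset.sum_congr rfl
        intro c _
        have he : (⟨(j : ℕ), j.isLt⟩ : Fin n) = j := rfl
        rw [he]
        rfl
      rw [hstep1, hstep2, hstep3, Finset.sum_congr rfl hstep4, hstep5, hNc]
      rw [Matrix.one_apply, Matrix.one_apply]
      by_cases h : q2 = q
      · rw [if_pos h, if_pos (by rw [h])]
      · rw [if_neg h, if_neg (by simp [h])]



/-- The trajectory-reconstruction matrix on sum-type indices. -/
def TK (n m p L : ℕ) (P : Matrix (Fin n) (Fin L × Fin p) ℝ) (A : Matrix (Fin n) (Fin n) ℝ)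
    (B : Matrix (Fin n) (Fin m) ℝ) (C : Matrix (Fin p) (Fin n) ℝ) :
    Matrix ((Fin L × Fin m) ⊕ Fin n) ((Fin L × Fin m) ⊕ (Fin L × Fin p)) ℝ :=
  Matrix.fromBlocks 1 0 (-(P * toepM n m p L A B C)) P

/-- A right inverse for `TK`. -/
def RK (n m p L : ℕ) (A : Matrix (Fin n) (Fin n) ℝ) (B : Matrix (Fin n) (Fin m) ℝ)
    (C : Matrix (Fin p) (Fin n) ℝ) :
    Matrix ((Fin L × Fin m) ⊕ (Fin L × Fin p)) ((Fin L × Fin m) ⊕ Fin n) ℝ :=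
  Matrix.fromBlocks 1 0 (toepM n m p L A B C) (obsMat n p L A C)

lemma TK_mul_RK {n m p L : ℕ} (P : Matrix (Fin n) (Fin L × Fin p) ℝ)
    (A : Matrix (Fin n) (Fin n) ℝ) (B : Matrix (Fin n) (Fin m) ℝ)
    (C : Matrix (Fin p) (Fin n) ℝ) (hP : P * obsMat n p L A C = 1) :
    TK n m p L P A B C * RK n m p L A B C = 1 := by
  rw [TK, RK, Matrix.fromBlocks_multiply]
  rw [← Matrix.fromBlocks_one]
  congr 1 <;> try simp [hP]


/-- Shift block. -/
def shiftS (m L : ℕ) : Matrix (Fin L × Fin m) (Fin L × Fin m) ℝ :=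
  fun ib jb => if (ib.1 : ℕ) = (jb.1 : ℕ) + 1 ∧ ib.2 = jb.2 then 1 else 0

/-- Last-input selector block. -/
def lastF (n m L : ℕ) (B : Matrix (Fin n) (Fin m) ℝ) : Matrix (Fin n) (Fin L × Fin m) ℝ :=
  fun q jb => if (jb.1 : ℕ) = L - 1 then B q jb.2 else 0

lemma AzK_eq {n m L : ℕ} (A : Matrix (Fin n) (Fin n) ℝ) (B : Matrix (Fin n) (Fin m) ℝ) :
    AzK n m L A B = Matrix.fromBlocks (shiftS m L) 0 (lastF n m L B) A := rfl

/-- The "C" matrix of the non-minimal realization. -/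
def CzK (n m p L : ℕ) (A : Matrix (Fin n) (Fin n) ℝ) (B : Matrix (Fin n) (Fin m) ℝ)
    (C : Matrix (Fin p) (Fin n) ℝ) : Matrix (Fin p) ((Fin L × Fin m) ⊕ Fin n) ℝ :=
  fun a k => Sum.elim
    (fun jb : Fin L × Fin m => (C * A ^ (jb.1 : ℕ) * B) a jb.2)
    (fun q => (C * A ^ L) a q) k

lemma TK_mulVec {n m p L : ℕ} (P : Matrix (Fin n) (Fin L × Fin p) ℝ)
    (A : Matrix (Fin n) (Fin n) ℝ) (B : Matrix (Fin n) (Fin m) ℝ)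
    (C : Matrix (Fin p) (Fin n) ℝ) (hP : P * obsMat n p L A C = 1)
    (u : ℕ → Fin m → ℝ) (x : ℕ → Fin n → ℝ) (y : ℕ → Fin p → ℝ)
    (hx : ∀ t, x (t + 1) = A.mulVec (x t) + B.mulVec (u t))
    (hy : ∀ t, y t = C.mulVec (x t)) (t : ℕ) (ht : L ≤ t) :
    (TK n m p L P A B C).mulVec (xiState m p L u y t)
      = Sum.elim (uStack m L u t) (x (t - L)) := by
  rw [TK, Matrix.fromBlocks_mulVec]
  have h1 : xiState m p L u y t ∘ Sum.inl = uStack m L u t := rfl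
  have h2 : xiState m p L u y t ∘ Sum.inr = yStack p L y t := rfl
  rw [h1, h2, Matrix.one_mulVec, Matrix.zero_mulVec, add_zero,
    ystack_decomp A B C u x y hx hy t ht, Matrix.mulVec_add, Matrix.mulVec_mulVec,
    Matrix.mulVec_mulVec, hP, Matrix.one_mulVec, Matrix.neg_mulVec]
  exact congrArg (Sum.elim (uStack m L u t)) (by abel)

lemma step_K {n m L : ℕ} (hL : 1 ≤ L)
    (A : Matrix (Fin n) (Fin n) ℝ) (B : Matrix (Fin n) (Fin m) ℝ)
    (u : ℕ → Fin m → ℝ) (x : ℕ → Fin n → ℝ)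
    (hx : ∀ t, x (t + 1) = A.mulVec (x t) + B.mulVec (u t)) (t : ℕ) (ht : L ≤ t) :
    Sum.elim (uStack m L u (t + 1)) (x (t + 1 - L))
      = (AzK n m L A B).mulVec (Sum.elim (uStack m L u t) (x (t - L)))
        + (BzK n m L).mulVec (u t) := by
  rw [AzK_eq, Matrix.fromBlocks_mulVec]
  have h1 : Sum.elim (uStack m L u t) (x (t - L)) ∘ Sum.inl = uStack m L u t := rfl
  have h2 : Sum.elim (uStack m L u t) (x (t - L)) ∘ Sum.inr = x (t - L) := rfl
  rw [h1, h2]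
  funext k
  cases k with
  | inl ib =>
    obtain ⟨i, b⟩ := ib
    show uStack m L u (t + 1) (i, b)
      = ((shiftS m L).mulVec (uStack m L u t)
          + (0 : Matrix (Fin L × Fin m) (Fin n) ℝ).mulVec (x (t - L))) (i, b)
        + (BzK n m L).mulVec (u t) (Sum.inl (i, b))
    rw [Matrix.zero_mulVec]
    have hS : ((shiftS m L).mulVec (uStack m L u t)) (i, b)
        = if (i : ℕ) = 0 then 0 else u (t - (i : ℕ)) b := by
      show (∑ jb : Fin L × Fin m, (if (i : ℕ) = (jb.1 : ℕ) + 1 ∧ b = jb.2 then (1:ℝ) else 0)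
        * uStack m L u t jb) = _
      by_cases hi : (i : ℕ) = 0
      · rw [if_pos hi, sum_delta_zero _ _ _ (fun jb h => by omega)]
      · rw [if_neg hi]
        have hlt : (i : ℕ) - 1 < L := by omega
        rw [sum_delta_mul _ _ _ ((⟨(i : ℕ) - 1, hlt⟩ : Fin L), b)
          ⟨by show (i : ℕ) = (i : ℕ) - 1 + 1; omega, rfl⟩
          (fun jb hjb => Prod.ext (Fin.ext (by
            show (jb.1 : ℕ) = (i : ℕ) - 1
            have := hjb.1; omega)) hjb.2.symm), one_mul]
        show u (t - 1 - ((i : ℕ) - 1)) b = u (t - (i : ℕ)) b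
        have e1 : t - 1 - ((i : ℕ) - 1) = t - (i : ℕ) := by omega
        rw [e1]
    have hB : (BzK n m L).mulVec (u t) (Sum.inl (i, b))
        = if (i : ℕ) = 0 then u t b else 0 := by
      show (∑ c : Fin m, (if (i : ℕ) = 0 ∧ b = c then (1:ℝ) else 0) * u t c) = _
      by_cases hi : (i : ℕ) = 0
      · rw [if_pos hi, sum_delta_mul _ _ _ b ⟨hi, rfl⟩ (fun c hc => hc.2.symm), one_mul]
      · rw [if_neg hi, sum_delta_zero _ _ _ (fun c hc => hi hc.1)]
    rw [Pi.add_apply, hS, hB]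
    show u (t + 1 - 1 - (i : ℕ)) b = _
    by_cases hi : (i : ℕ) = 0
    · have e2 : t + 1 - 1 - (i : ℕ) = t := by omega
      rw [e2]
      simp [hi]
    · have e2 : t + 1 - 1 - (i : ℕ) = t - (i : ℕ) := by omega
      rw [e2]
      simp [hi]
  | inr q =>
    show x (t + 1 - L) q
      = ((lastF n m L B).mulVec (uStack m L u t)
          + A.mulVec (x (t - L))) q
        + (BzK n m L).mulVec (u t) (Sum.inr q)
    have hB0 : (BzK n m L).mulVec (u t) (Sum.inr q) = 0 := by
      show (∑ c : Fin m, (0:ℝ) * u t c) = 0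
      simp
    have hF : ((lastF n m L B).mulVec (uStack m L u t)) q
        = (B.mulVec (u (t - L))) q := by
      show (∑ jb : Fin L × Fin m, (if (jb.1 : ℕ) = L - 1 then B q jb.2 else 0)
        * uStack m L u t jb) = _
      rw [Fintype.sum_prod_type, Finset.sum_eq_single (⟨L - 1, by omega⟩ : Fin L)]
      · show (∑ b : Fin m, (if (L - 1 : ℕ) = L - 1 then B q b else 0)
          * u (t - 1 - (L - 1)) b) = _
        have e1 : t - 1 - (L - 1) = t - L := by omega
        rw [e1]
        apply Finset.sum_congr rfl
        intro b _
        rw [if_pos rfl]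
      · intro j _ hne
        apply Finset.sum_eq_zero
        intro b _
        rw [if_neg (fun hcon => hne (Fin.ext (by show (j : ℕ) = L - 1; exact hcon))), zero_mul]
      · intro h; exact absurd (Finset.mem_univ _) h
    rw [Pi.add_apply, hF, hB0, add_zero]
    have e3 : t + 1 - L = (t - L) + 1 := by omega
    rw [e3, hx (t - L), Pi.add_apply]
    rw [add_comm]

lemma output_K {n m p L : ℕ}
    (A : Matrix (Fin n) (Fin n) ℝ) (B : Matrix (Fin n) (Fin m) ℝ)
    (C : Matrix (Fin p) (Fin n) ℝ)
    (u : ℕ → Fin m → ℝ) (x : ℕ → Fin n → ℝ) (y : ℕ → Fin p → ℝ)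
    (hx : ∀ t, x (t + 1) = A.mulVec (x t) + B.mulVec (u t))
    (hy : ∀ t, y t = C.mulVec (x t)) (t : ℕ) (ht : L ≤ t) :
    y t = (CzK n m p L A B C).mulVec (Sum.elim (uStack m L u t) (x (t - L))) := by
  funext a
  have hxt : t = (t - L) + L := by omega
  rw [hy t]
  conv_lhs => rw [hxt, state_expand A B u x hx (t - L) L]
  rw [Matrix.mulVec_add, Matrix.mulVec_mulVec, mulVec_sum, Pi.add_apply, Finset.sum_apply]
  have hrhs : (CzK n m p L A B C).mulVec (Sum.elim (uStack m L u t) (x (t - L))) a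
      = (∑ jb : Fin L × Fin m, (C * A ^ (jb.1 : ℕ) * B) a jb.2 * u (t - 1 - (jb.1 : ℕ)) jb.2)
        + ((C * A ^ L).mulVec (x (t - L))) a := by
    show (∑ k : (Fin L × Fin m) ⊕ Fin n, CzK n m p L A B C a k
      * Sum.elim (uStack m L u t) (x (t - L)) k) = _
    rw [Fintype.sum_sum_type]
    rfl
  rw [hrhs, add_comm]
  congr 1
  rw [Fintype.sum_prod_type, ← Fin.sum_univ_eq_sum_range
    (fun j => (C.mulVec ((A ^ j * B).mulVec (u (t - L + L - 1 - j)))) a) L]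
  apply Finset.sum_congr rfl
  intro j _
  show (C.mulVec ((A ^ (j : ℕ) * B).mulVec (u (t - L + L - 1 - (j : ℕ))))) a = _
  have e1 : t - L + L - 1 - (j : ℕ) = t - 1 - (j : ℕ) := by omega
  rw [Matrix.mulVec_mulVec, ← Matrix.mul_assoc, e1]
  rfl

theorem controllable_nonminimal_realization
    (n m p L : ℕ) (hL : 1 ≤ L)
    (A : Matrix (Fin n) (Fin n) ℝ) (B : Matrix (Fin n) (Fin m) ℝ)
    (C : Matrix (Fin p) (Fin n) ℝ)
    (hctrb : (ctrbPairMat n m A B).rank = n)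
    (hobs : (obsMat n p L A C).rank = n) :
    ∃ (T : Matrix (Fin (m * L + n)) ((Fin L × Fin m) ⊕ (Fin L × Fin p)) ℝ)
      (Az : Matrix (Fin (m * L + n)) (Fin (m * L + n)) ℝ)
      (Bz : Matrix (Fin (m * L + n)) (Fin m) ℝ)
      (Cz : Matrix (Fin p) (Fin (m * L + n)) ℝ),
      T.rank = m * L + n ∧
      (ctrbPairMat (m * L + n) m Az Bz).rank = m * L + n ∧
      ∀ (u : ℕ → Fin m → ℝ) (x : ℕ → Fin n → ℝ) (y : ℕ → Fin p → ℝ),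
        (∀ t : ℕ, x (t + 1) = A.mulVec (x t) + B.mulVec (u t)) →
        (∀ t : ℕ, y t = C.mulVec (x t)) →
        ∀ t : ℕ, L ≤ t →
          T.mulVec (xiState m p L u y (t + 1)) =
              Az.mulVec (T.mulVec (xiState m p L u y t)) + Bz.mulVec (u t) ∧
            y t = Cz.mulVec (T.mulVec (xiState m p L u y t)) := by
  rcases Nat.eq_zero_or_pos m with hm | hm
  · -- degenerate case: no inputs forces n = 0 by controllability
    subst hm
    have hn : n = 0 := by
      have h1 := Matrix.rank_le_card_width (ctrbPairMat n 0 A B)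
      simp at h1
      omega
    subst hn
    refine ⟨0, 0, 0, 0, ?_, ?_, ?_⟩
    · have h2 := Matrix.rank_le_card_height
        (0 : Matrix (Fin (0 * L + 0)) ((Fin L × Fin 0) ⊕ (Fin L × Fin p)) ℝ)
      rw [Fintype.card_fin] at h2
      omega
    · have h2 := Matrix.rank_le_card_height
        (ctrbPairMat (0 * L + 0) 0 0 (0 : Matrix (Fin (0 * L + 0)) (Fin 0) ℝ))
      rw [Fintype.card_fin] at h2
      omega
    · intro u x y hx hy t ht
      constructor
      · funext i
        exact absurd i.isLt (by omega)
      · rw [hy t, Matrix.zero_mulVec]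
        funext a
        show (∑ j : Fin 0, C a j * x t j) = 0
        simp
  · -- main case
    obtain ⟨P, hP⟩ := exists_left_inverse_obs A C hobs
    obtain ⟨Nc, hNc⟩ := exists_right_inverse_ctrb A B hctrb
    set e : ((Fin L × Fin m) ⊕ Fin n) ≃ Fin (m * L + n) :=
      (Equiv.sumCongr (finProdFinEquiv.trans (finCongr (Nat.mul_comm L m)))
        (Equiv.refl (Fin n))).trans finSumFinEquiv with he
    refine ⟨(TK n m p L P A B C).submatrix e.symm id,
            (AzK n m L A B).submatrix e.symm e.symm,
            (BzK n m L).submatrix e.symm id,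
            (CzK n m p L A B C).submatrix id e.symm, ?_, ?_, ?_⟩
    · refine rank_eq_of_right_inv _ ((RK n m p L A B C).submatrix id e.symm) ?_
      have hmul : (TK n m p L P A B C).submatrix e.symm id
            * (RK n m p L A B C).submatrix id e.symm
          = (TK n m p L P A B C * RK n m p L A B C).submatrix e.symm e.symm :=
        Matrix.submatrix_mul_equiv _ _ _ (Equiv.refl _) _
      rw [hmul, TK_mul_RK P A B C hP, Matrix.submatrix_one_equiv e.symm]
    · have hpow : ∀ k : ℕ, ((AzK n m L A B).submatrix e.symm e.symm) ^ k
          = (AzK n m L A B ^ k).submatrix e.symm e.symm := by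
        intro k
        have h3 : (AzK n m L A B).submatrix e.symm e.symm
            = (Matrix.reindexAlgEquiv ℝ ℝ e) (AzK n m L A B) := rfl
        rw [h3, ← map_pow]
        rfl
      have hctrbEq : ctrbPairMat (m * L + n) m
            ((AzK n m L A B).submatrix e.symm e.symm) ((BzK n m L).submatrix e.symm id)
          = (ctrbK n m L (m * L + n) A B).submatrix e.symm id := by
        ext i κc
        show ((((AzK n m L A B).submatrix e.symm e.symm) ^ (κc.1 : ℕ))
          * (BzK n m L).submatrix e.symm id) i κc.2 = _
        rw [hpow]
        have h4 : (AzK n m L A B ^ (κc.1 : ℕ)).submatrix e.symm e.symm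
              * (BzK n m L).submatrix e.symm id
            = (AzK n m L A B ^ (κc.1 : ℕ) * BzK n m L).submatrix e.symm id :=
          Matrix.submatrix_mul_equiv _ _ _ e.symm _
        rw [h4, pow_mul_BzK hL A B]
        rfl
      rw [hctrbEq]
      refine rank_eq_of_right_inv _ ((NK n m L (m * L + n) Nc).submatrix id e.symm) ?_
      have hmul2 : (ctrbK n m L (m * L + n) A B).submatrix e.symm id
            * (NK n m L (m * L + n) Nc).submatrix id e.symm
          = (ctrbK n m L (m * L + n) A B * NK n m L (m * L + n) Nc).submatrix e.symm e.symm :=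
        Matrix.submatrix_mul_equiv _ _ _ (Equiv.refl _) _
      rw [hmul2, ctrbK_mul_NK hL hm A B Nc hNc, Matrix.submatrix_one_equiv e.symm]
    · intro u x y hx hy t ht
      have hTv : ∀ s, L ≤ s →
          ((TK n m p L P A B C).submatrix e.symm id).mulVec (xiState m p L u y s)
            = (Sum.elim (uStack m L u s) (x (s - L))) ∘ e.symm := by
        intro s hs
        funext i
        show ((TK n m p L P A B C).mulVec (xiState m p L u y s)) (e.symm i) = _
        rw [TK_mulVec P A B C hP u x y hx hy s hs]
        rfl
      constructor
      · rw [hTv (t + 1) (by omega), hTv t ht]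
        funext i
        show Sum.elim (uStack m L u (t + 1)) (x (t + 1 - L)) (e.symm i) = _
        rw [step_K hL A B u x hx t ht]
        rw [Pi.add_apply, Pi.add_apply]
        congr 1
        · show ((AzK n m L A B).mulVec (Sum.elim (uStack m L u t) (x (t - L)))) (e.symm i) = _
          show (∑ k, AzK n m L A B (e.symm i) k * Sum.elim (uStack m L u t) (x (t - L)) k) = _
          show _ = ∑ j : Fin (m * L + n), AzK n m L A B (e.symm i) (e.symm j)
            * (Sum.elim (uStack m L u t) (x (t - L)) ∘ e.symm) j
          exact (Equiv.sum_comp e.symm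
            (fun k => AzK n m L A B (e.symm i) k * Sum.elim (uStack m L u t) (x (t - L)) k)).symm
      · rw [hTv t ht]
        have h5 : ((CzK n m p L A B C).submatrix id e.symm).mulVec
              ((Sum.elim (uStack m L u t) (x (t - L))) ∘ e.symm)
            = (CzK n m p L A B C).mulVec (Sum.elim (uStack m L u t) (x (t - L))) := by
          funext a
          show (∑ j : Fin (m * L + n), CzK n m p L A B C a (e.symm j)
            * (Sum.elim (uStack m L u t) (x (t - L)) ∘ e.symm) j) = _
          exact Equiv.sum_comp e.symm
            (fun k => CzK n m p L A B C a k * Sum.elim (uStack m L u t) (x (t - L)) k)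
        rw [h5]
        exact output_K A B C u x y hx hy t ht
end

section
/- (Gradient of the covariance-parameterized LQR cost.) Fix real matrices Ū ∈ ℝ^{m×q}, Z̄₁ ∈ ℝ^{d×q}, a symmetric matrix Q ∈ ℝ^{d×d}, and a symmetric matrix R ∈ ℝ^{m×m}. For V ∈ ℝ^{q×d} with spectral radius of Z̄₁·V strictly less than 1, define Σ(V) = ∑_{k=0}^{∞} (Z̄₁V)^k·((Z̄₁V)^k)ᵀ, P(V) = ∑_{k=0}^{∞} ((Z̄₁V)ᵀ)^k·(Q + Vᵀ·Ūᵀ·R·Ū·V)·(Z̄₁V)^k, and J(V) = Tr( (Q + Vᵀ·Ūᵀ·R·Ū·V)·Σ(V) ). Then at every such V, J is Fréchet differentiable and its derivative in direction Δ ∈ ℝ^{q×d} equals Tr(Gᵀ·Δ), where G = 2·(Ūᵀ·R·Ū + Z̄₁ᵀ·P(V)·Z̄₁)·V·Σ(V); equivalently, the gradient of J at V is ∇J(V) = 2(ŪᵀRŪ + Z̄₁ᵀP(V)Z̄₁)·V·Σ(V), where Σ(V) satisfies Σ = I_d + Z̄₁VΣVᵀZ̄₁ᵀ and P(V) satisfies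 P = Q + VᵀŪᵀRŪV + VᵀZ̄₁ᵀPZ̄₁V. -/
open Matrix Filter Topology

attribute [local instance]
  Matrix.linftyOpNormedRing Matrix.linftyOpNormedAddCommGroup Matrix.linftyOpNormedSpace

/-- Closed-loop state covariance `Σ(V) = ∑_{k≥0} (Z̄₁V)^k ((Z̄₁V)^k)ᵀ`. -/
noncomputable def clSigma (d q : ℕ) (Z1 : Matrix (Fin d) (Fin q) ℝ)
    (V : Matrix (Fin q) (Fin d) ℝ) : Matrix (Fin d) (Fin d) ℝ :=
  ∑' k : ℕ, (Z1 * V) ^ k * ((Z1 * V) ^ k)ᵀ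

/-- Value matrix `P(V) = ∑_{k≥0} ((Z̄₁V)ᵀ)^k (Q + VᵀŪᵀRŪV) (Z̄₁V)^k`. -/
noncomputable def clP (m d q : ℕ) (Ubar : Matrix (Fin m) (Fin q) ℝ)
    (Z1 : Matrix (Fin d) (Fin q) ℝ) (Q : Matrix (Fin d) (Fin d) ℝ)
    (R : Matrix (Fin m) (Fin m) ℝ) (V : Matrix (Fin q) (Fin d) ℝ) :
    Matrix (Fin d) (Fin d) ℝ :=
  ∑' k : ℕ, ((Z1 * V)ᵀ) ^ k * (Q + Vᵀ * Ubarᵀ * R * Ubar * V) * (Z1 * V) ^ k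

/-- Covariance-parameterized LQR cost `J(V) = Tr((Q + VᵀŪᵀRŪV) Σ(V))`. -/
noncomputable def Jcost (m d q : ℕ) (Ubar : Matrix (Fin m) (Fin q) ℝ)
    (Z1 : Matrix (Fin d) (Fin q) ℝ) (Q : Matrix (Fin d) (Fin d) ℝ)
    (R : Matrix (Fin m) (Fin m) ℝ) (V : Matrix (Fin q) (Fin d) ℝ) : ℝ :=
  Matrix.trace ((Q + Vᵀ * Ubarᵀ * R * Ubar * V) * clSigma d q Z1 V)

open NNReal

attribute [local instance] Matrix.linftyOpNormedAlgebra

noncomputable instance sqMatUniformSpace (d : ℕ) : UniformSpace (Matrix (Fin d) (Fin d) ℝ) :=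
  (Matrix.linftyOpNormedRing).toUniformSpace

noncomputable instance sqMatTopologicalSpace (d : ℕ) : TopologicalSpace (Matrix (Fin d) (Fin d) ℝ) :=
  (sqMatUniformSpace d).toTopologicalSpace

set_option maxHeartbeats 1000000
set_option synthInstance.maxHeartbeats 400000

lemma entry_le_norm {d q : ℕ} (B : Matrix (Fin d) (Fin q) ℝ) (i : Fin d) (j : Fin q) :
    ‖B i j‖₊ ≤ ‖B‖₊ := by
  rw [Matrix.linfty_opNNNorm_def]
  refine le_trans ?_ (Finset.le_sup (f := fun i => ∑ j' : Fin q, ‖B i j'‖₊) (Finset.mem_univ i))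
  exact Finset.single_le_sum (f := fun j' => ‖B i j'‖₊) (fun _ _ => zero_le) (Finset.mem_univ j)

lemma norm_transpose_le {d q : ℕ} (B : Matrix (Fin d) (Fin q) ℝ) :
    ‖Bᵀ‖ ≤ d * ‖B‖ := by
  have h : ‖Bᵀ‖₊ ≤ (d : ℝ≥0) * ‖B‖₊ := by
    rw [Matrix.linfty_opNNNorm_def]
    apply Finset.sup_le
    intro j _
    refine le_trans (Finset.sum_le_sum (fun i _ => entry_le_norm B i j)) ?_
    simp [Finset.sum_const]
  calc ‖Bᵀ‖ = ((‖Bᵀ‖₊ : ℝ≥0) : ℝ) := rfl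
    _ ≤ (((d : ℝ≥0) * ‖B‖₊ : ℝ≥0) : ℝ) := NNReal.coe_le_coe.mpr h
    _ = d * ‖B‖ := by push_cast; rfl

lemma summable_pow_norm {A : Type*} [NormedRing A] {x : A} {N : ℕ} (hN : 0 < N)
    (hx : ‖x ^ N‖ < 2⁻¹) : Summable fun n => ‖x ^ n‖ := by
  haveI : NeZero N := ⟨hN.ne'⟩
  set c := ∑ j ∈ Finset.range N, ‖x ^ j‖ with hc
  have hcnn : ∀ r < N, ‖x ^ r‖ ≤ c := by
    intro r hr
    exact Finset.single_le_sum (f := fun j => ‖x ^ j‖) (fun _ _ => norm_nonneg _)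
      (Finset.mem_range.mpr hr)
  have key : ∀ k : ℕ, ∀ r < N, ‖x ^ (k * N + r)‖ ≤ (2⁻¹ : ℝ) ^ k * c := by
    intro k r hr
    rcases Nat.eq_zero_or_pos k with rfl | hk
    · simpa using hcnn r hr
    · calc ‖x ^ (k * N + r)‖ = ‖(x ^ N) ^ k * x ^ r‖ := by
            rw [← pow_mul, ← pow_add, Nat.mul_comm]
        _ ≤ ‖(x ^ N) ^ k‖ * ‖x ^ r‖ := norm_mul_le _ _
        _ ≤ ‖x ^ N‖ ^ k * c := by
            refine mul_le_mul (norm_pow_le' _ hk) (hcnn r hr) (norm_nonneg _) ?_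
            positivity
        _ ≤ (2⁻¹ : ℝ) ^ k * c := by
            refine mul_le_mul_of_nonneg_right (pow_le_pow_left₀ (norm_nonneg _) hx.le k) ?_
            refine Finset.sum_nonneg fun _ _ => norm_nonneg _
  rw [← Equiv.summable_iff (Nat.divModEquiv N).symm]
  have hnonneg : 0 ≤ fun p : ℕ × Fin N => ‖x ^ (((Nat.divModEquiv N).symm p : ℕ))‖ :=
    fun p => norm_nonneg _
  refine Summable.of_nonneg_of_le
    (g := ((fun n => ‖x ^ n‖) ∘ ⇑(Nat.divModEquiv N).symm))
    (f := fun p : ℕ × Fin N => (2⁻¹ : ℝ) ^ p.1 * c)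
    (fun p => norm_nonneg _) ?_ ?_
  · intro p
    have : ((Nat.divModEquiv N).symm p : ℕ) = p.1 * N + p.2 := by simp [Nat.divModEquiv]
    simp only [Function.comp]
    rw [this]
    exact key p.1 p.2 p.2.isLt
  · rw [summable_prod_of_nonneg (by
      intro p
      have : (0:ℝ) ≤ (2⁻¹ : ℝ) ^ p.1 * c := by positivity
      exact this)]
    constructor
    · intro k; exact Summable.of_finite
    · have : Summable fun k : ℕ => (N : ℝ) * ((2⁻¹ : ℝ) ^ k * c) := by
        exact (((summable_geometric_of_lt_one (by norm_num) (by norm_num)).mul_right c).mul_left _)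
      refine this.congr fun k => ?_
      simp [tsum_fintype, Finset.sum_const, mul_comm]

lemma geom_partial (A : Type*) [Ring A] (x : A) :
    ∀ n : ℕ, (∑ i ∈ Finset.range n, (1 - x) * x ^ i = 1 - x ^ n) ∧
      (∑ i ∈ Finset.range n, x ^ i * (1 - x) = 1 - x ^ n) := by
  intro n
  induction n with
  | zero => simp
  | succ n ih =>
    constructor
    · rw [Finset.sum_range_succ, ih.1, sub_mul, one_mul, pow_succ']
      abel
    · rw [Finset.sum_range_succ, ih.2, mul_sub, mul_one, pow_succ]
      abel

lemma unit_one_sub {A : Type*} [NormedRing A] [CompleteSpace A] {x : A}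
    (h : Summable fun n => ‖x ^ n‖) :
    ∃ u : Aˣ, ((u : A) = 1 - x ∧ ((u⁻¹ : Aˣ) : A) = ∑' n, x ^ n) := by
  have hs : Summable fun n => x ^ n := Summable.of_norm h
  have hx0 : Tendsto (fun n : ℕ => x ^ n) atTop (𝓝 0) :=
    tendsto_zero_iff_norm_tendsto_zero.mpr (by simpa using h.tendsto_atTop_zero)
  set S := ∑' n : ℕ, x ^ n with hS
  have hlim : Tendsto (fun n : ℕ => 1 - x ^ n) atTop (𝓝 1) := by
    simpa using (tendsto_const_nhds (x := (1:A)) (f := atTop)).sub hx0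
  have h1 : (1 - x) * S = 1 := by
    have h2 : HasSum (fun n => (1 - x) * x ^ n) ((1 - x) * S) := hs.hasSum.mul_left _
    have h3 := h2.tendsto_sum_nat
    have h4 : (fun n => ∑ i ∈ Finset.range n, (1 - x) * x ^ i) = fun n => 1 - x ^ n := by
      funext n; exact (geom_partial A x n).1
    rw [h4] at h3
    exact tendsto_nhds_unique h3 hlim
  have h1' : S * (1 - x) = 1 := by
    have h2 : HasSum (fun n => x ^ n * (1 - x)) (S * (1 - x)) := hs.hasSum.mul_right _
    have h3 := h2.tendsto_sum_nat
    have h4 : (fun n => ∑ i ∈ Finset.range n, x ^ i * (1 - x)) = fun n => 1 - x ^ n := by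
      funext n; exact (geom_partial A x n).2
    rw [h4] at h3
    exact tendsto_nhds_unique h3 hlim
  exact ⟨⟨1 - x, S, h1, h1'⟩, rfl, rfl⟩

lemma ring_inverse_one_sub {A : Type*} [NormedRing A] [CompleteSpace A] {x : A}
    (h : Summable fun n => ‖x ^ n‖) :
    Ring.inverse (1 - x) = ∑' n : ℕ, x ^ n := by
  obtain ⟨u, hu, hui⟩ := unit_one_sub h
  rw [← hu, Ring.inverse_unit, hui]

lemma eventually_summable {A : Type*} [NormedRing A] {x₀ : A} {N : ℕ} (hN : 0 < N)
    (h : ‖x₀ ^ N‖ < 2⁻¹) :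
    ∀ᶠ x in 𝓝 x₀, Summable fun n => ‖x ^ n‖ := by
  have hc : Tendsto (fun x : A => ‖x ^ N‖) (𝓝 x₀) (𝓝 ‖x₀ ^ N‖) :=
    ((continuous_pow N).norm.tendsto x₀)
  filter_upwards [hc.eventually_lt_const h] with x hx
  exact summable_pow_norm hN hx

variable {𝕍 F : Type*} [NormedAddCommGroup 𝕍] [NormedSpace ℝ 𝕍] [FiniteDimensional ℝ 𝕍]
  [NormedAddCommGroup F] [NormedSpace ℝ F]

noncomputable def bilCLM (b : 𝕍 →ₗ[ℝ] 𝕍 →ₗ[ℝ] F) : 𝕍 →L[ℝ] 𝕍 →L[ℝ] F :=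
  LinearMap.toContinuousLinearMap
    ((LinearMap.toContinuousLinearMap :
        (𝕍 →ₗ[ℝ] F) ≃ₗ[ℝ] (𝕍 →L[ℝ] F)).toLinearMap.comp b)

@[simp] lemma bilCLM_apply (b : 𝕍 →ₗ[ℝ] 𝕍 →ₗ[ℝ] F) (W X : 𝕍) :
    bilCLM b W X = b W X := rfl

lemma hasFDerivAt_quadratic (b : 𝕍 →ₗ[ℝ] 𝕍 →ₗ[ℝ] F) (V : 𝕍) :
    HasFDerivAt (fun W => b W W)
      (LinearMap.toContinuousLinearMap (b V + b.flip V)) V := by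
  have hb : HasFDerivAt (fun p : 𝕍 × 𝕍 => bilCLM b p.1 p.2)
      ((ContinuousLinearMap.isBoundedBilinearMap (bilCLM b)).deriv (V, V))
      ((fun W : 𝕍 => (W, W)) V) :=
    (ContinuousLinearMap.isBoundedBilinearMap (bilCLM b)).hasFDerivAt (V, V)
  have hdiag : HasFDerivAt (fun W : 𝕍 => (W, W))
      ((ContinuousLinearMap.id ℝ 𝕍).prod (ContinuousLinearMap.id ℝ 𝕍)) V :=
    (hasFDerivAt_id V).prodMk (hasFDerivAt_id V)
  have hcomp := HasFDerivAt.comp (g := fun p : 𝕍 × 𝕍 => bilCLM b p.1 p.2)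
    (f := fun W : 𝕍 => (W, W)) V hb hdiag
  have hfun : ((fun p : 𝕍 × 𝕍 => bilCLM b p.1 p.2) ∘ fun W : 𝕍 => (W, W))
      = fun W => b W W := by
    funext W; simp [Function.comp]
  rw [hfun] at hcomp
  refine hcomp.congr_fderiv ?_
  ext Δ
  simp [IsBoundedBilinearMap.deriv_apply, ContinuousLinearMap.comp_apply]

noncomputable def sandL (d : ℕ) (A B : Matrix (Fin d) (Fin d) ℝ) :
    Matrix (Fin d) (Fin d) ℝ →L[ℝ] Matrix (Fin d) (Fin d) ℝ :=
  LinearMap.toContinuousLinearMap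
    { toFun := fun X => A * X * B
      map_add' := by intro X Y; rw [Matrix.mul_add, Matrix.add_mul]
      map_smul' := by intro c X; simp [Matrix.mul_smul, Matrix.smul_mul] }

@[simp] lemma sandL_apply (d : ℕ) (A B X : Matrix (Fin d) (Fin d) ℝ) :
    sandL d A B X = A * X * B := rfl

lemma sandL_comp (d : ℕ) (A B C D : Matrix (Fin d) (Fin d) ℝ) :
    sandL d A B * sandL d C D = sandL d (A * C) (D * B) := by
  ext X
  simp [Matrix.mul_assoc]

lemma sandL_pow (d : ℕ) (A : Matrix (Fin d) (Fin d) ℝ) (n : ℕ) :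
    (sandL d A Aᵀ) ^ n = sandL d (A ^ n) ((A ^ n)ᵀ) := by
  induction n with
  | zero =>
    ext X; simp
  | succ n ih =>
    rw [pow_succ', ih, sandL_comp, ← pow_succ', Matrix.transpose_pow, Matrix.transpose_pow,
      ← pow_succ]

lemma sandL_pow' (d : ℕ) (A : Matrix (Fin d) (Fin d) ℝ) (n : ℕ) :
    (sandL d Aᵀ A) ^ n = sandL d ((Aᵀ) ^ n) (A ^ n) := by
  induction n with
  | zero => ext X; simp
  | succ n ih =>
    rw [pow_succ', ih, sandL_comp, ← pow_succ', ← pow_succ]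

lemma sandL_norm_le (d : ℕ) (A B : Matrix (Fin d) (Fin d) ℝ) :
    ‖sandL d A B‖ ≤ ‖A‖ * ‖B‖ := by
  refine ContinuousLinearMap.opNorm_le_bound _ (by positivity) fun X => ?_
  calc ‖sandL d A B X‖ = ‖A * X * B‖ := rfl
    _ ≤ ‖A * X‖ * ‖B‖ := Matrix.linfty_opNorm_mul _ _
    _ ≤ ‖A‖ * ‖X‖ * ‖B‖ := by
        refine mul_le_mul_of_nonneg_right (Matrix.linfty_opNorm_mul _ _) (norm_nonneg _)
    _ = ‖A‖ * ‖B‖ * ‖X‖ := by ring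
section main
variable (m d q : ℕ)
  (Ubar : Matrix (Fin m) (Fin q) ℝ) (Z1 : Matrix (Fin d) (Fin q) ℝ)
  (Q : Matrix (Fin d) (Fin d) ℝ)
  (R : Matrix (Fin m) (Fin m) ℝ)
  (V : Matrix (Fin q) (Fin d) ℝ)

-- decay of powers
lemma norm_pow_tendsto_zero
    (ρV : ℝ) (hρ : ρV < 1)
    (hlim : Tendsto (fun k : ℕ => ‖(Z1 * V) ^ k‖ ^ ((k : ℝ)⁻¹)) atTop (𝓝 ρV)) :
    Tendsto (fun k : ℕ => ‖(Z1 * V) ^ k‖) atTop (𝓝 0) := by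
  set A := Z1 * V
  set r : ℝ := (max ρV 0 + 1) / 2 with hr
  have hmax1 : max ρV 0 < 1 := by
    rcases le_or_gt ρV 0 with h | h
    · simpa [max_eq_right h] using one_pos
    · simpa [max_eq_left h.le] using hρ
  have hρr : ρV < r := by
    have : max ρV 0 < r := by rw [hr]; linarith
    exact lt_of_le_of_lt (le_max_left _ _) this
  have hr0 : 0 < r := by
    have : (0:ℝ) ≤ max ρV 0 := le_max_right _ _
    rw [hr]; linarith
  have hr1 : r < 1 := by rw [hr]; linarith
  have hev : ∀ᶠ k : ℕ in atTop, ‖A ^ k‖ ^ ((k : ℝ)⁻¹) < r :=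
    hlim.eventually_lt_const hρr
  have hev2 : ∀ᶠ k : ℕ in atTop, ‖A ^ k‖ ≤ r ^ k := by
    filter_upwards [hev, eventually_ge_atTop 1] with k hk hk1
    have hk0 : (k : ℕ) ≠ 0 := by omega
    have hb : (0:ℝ) ≤ ‖A ^ k‖ := norm_nonneg _
    have heq : (‖A ^ k‖ ^ ((k : ℝ)⁻¹)) ^ k = ‖A ^ k‖ := by
      rw [← Real.rpow_natCast (‖A ^ k‖ ^ ((k : ℝ)⁻¹)) k, ← Real.rpow_mul hb]
      rw [inv_mul_cancel₀ (by exact_mod_cast hk0), Real.rpow_one]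
    calc ‖A ^ k‖ = (‖A ^ k‖ ^ ((k : ℝ)⁻¹)) ^ k := heq.symm
      _ ≤ r ^ k := by
          refine pow_le_pow_left₀ (Real.rpow_nonneg hb _) hk.le k
  have hgeo : Tendsto (fun k : ℕ => r ^ k) atTop (𝓝 0) :=
    tendsto_pow_atTop_nhds_zero_of_lt_one hr0.le hr1
  refine tendsto_of_tendsto_of_tendsto_of_le_of_le' tendsto_const_nhds hgeo ?_ hev2
  exact Eventually.of_forall fun k => norm_nonneg _

noncomputable def Tm (d q : ℕ) (Z1 : Matrix (Fin d) (Fin q) ℝ)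
    (V' : Matrix (Fin q) (Fin d) ℝ) :
    Matrix (Fin d) (Fin d) ℝ →L[ℝ] Matrix (Fin d) (Fin d) ℝ :=
  sandL d (Z1 * V') (Z1 * V')ᵀ

noncomputable def TmSt (d q : ℕ) (Z1 : Matrix (Fin d) (Fin q) ℝ)
    (V' : Matrix (Fin q) (Fin d) ℝ) :
    Matrix (Fin d) (Fin d) ℝ →L[ℝ] Matrix (Fin d) (Fin d) ℝ :=
  sandL d (Z1 * V')ᵀ (Z1 * V')

lemma exists_good_N
    (ρV : ℝ) (hρ : ρV < 1)
    (hlim : Tendsto (fun k : ℕ => ‖(Z1 * V) ^ k‖ ^ ((k : ℝ)⁻¹)) atTop (𝓝 ρV)) :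
    ∃ N : ℕ, 0 < N ∧ ‖(Tm d q Z1 V) ^ N‖ < 2⁻¹ ∧ ‖(TmSt d q Z1 V) ^ N‖ < 2⁻¹ := by
  have h0 := norm_pow_tendsto_zero d q Z1 V ρV hρ hlim
  set A := Z1 * V with hA
  set δ : ℝ := (2 * ((d : ℝ) + 1))⁻¹ with hδ
  have hδpos : 0 < δ := by rw [hδ]; positivity
  set ε : ℝ := min 1 δ with hε
  have hεpos : 0 < ε := lt_min one_pos hδpos
  obtain ⟨N, hN⟩ := ((h0.eventually_lt_const hεpos).and (eventually_ge_atTop 1)).exists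
  obtain ⟨hNe, hN1⟩ := hN
  set x := ‖A ^ N‖ with hx
  have hx0 : 0 ≤ x := norm_nonneg _
  have hy0 : 0 ≤ ‖(A ^ N)ᵀ‖ := norm_nonneg _
  have hyx : ‖(A ^ N)ᵀ‖ ≤ d * x := norm_transpose_le _
  have hx1 : x ≤ 1 := le_trans hNe.le (min_le_left _ _)
  have hxδ : x ≤ δ := le_trans hNe.le (min_le_right _ _)
  have hdd : (d : ℝ) * δ < 2⁻¹ := by
    have h1 : (d : ℝ) < (d : ℝ) + 1 := by linarith
    calc (d : ℝ) * δ < ((d : ℝ) + 1) * δ := mul_lt_mul_of_pos_right h1 hδpos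
      _ = 2⁻¹ := by rw [hδ]; field_simp
  have key : x * ‖(A ^ N)ᵀ‖ < 2⁻¹ := by
    calc x * ‖(A ^ N)ᵀ‖ ≤ x * ((d : ℝ) * x) := mul_le_mul_of_nonneg_left hyx hx0
      _ = ((d : ℝ) * x) * x := by ring
      _ ≤ ((d : ℝ) * δ) * 1 := by
          refine mul_le_mul (mul_le_mul_of_nonneg_left hxδ (by positivity)) hx1 hx0 (by positivity)
      _ = (d : ℝ) * δ := mul_one _
      _ < 2⁻¹ := hdd
  refine ⟨N, by omega, ?_, ?_⟩
  · calc ‖(Tm d q Z1 V) ^ N‖ = ‖sandL d (A ^ N) ((A ^ N)ᵀ)‖ := by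
          rw [Tm, sandL_pow]
      _ ≤ x * ‖(A ^ N)ᵀ‖ := sandL_norm_le _ _ _
      _ < 2⁻¹ := key
  · calc ‖(TmSt d q Z1 V) ^ N‖ = ‖sandL d ((A ^ N)ᵀ) (A ^ N)‖ := by
          rw [TmSt, sandL_pow', Matrix.transpose_pow]
      _ ≤ ‖(A ^ N)ᵀ‖ * x := sandL_norm_le _ _ _
      _ < 2⁻¹ := by rw [mul_comm]; exact key

lemma tm_pow_apply (V' : Matrix (Fin q) (Fin d) ℝ) (n : ℕ)
    (X : Matrix (Fin d) (Fin d) ℝ) :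
    ((Tm d q Z1 V') ^ n) X = (Z1 * V') ^ n * X * ((Z1 * V') ^ n)ᵀ := by
  rw [Tm, sandL_pow, sandL_apply]

lemma tmSt_pow_apply (V' : Matrix (Fin q) (Fin d) ℝ) (n : ℕ)
    (X : Matrix (Fin d) (Fin d) ℝ) :
    ((TmSt d q Z1 V') ^ n) X = ((Z1 * V') ^ n)ᵀ * X * (Z1 * V') ^ n := by
  rw [TmSt, sandL_pow', sandL_apply, Matrix.transpose_pow]

lemma tm_tsum_apply (V' : Matrix (Fin q) (Fin d) ℝ)
    (hsum : Summable fun n : ℕ => ‖(Tm d q Z1 V') ^ n‖)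
    (X : Matrix (Fin d) (Fin d) ℝ) :
    HasSum (fun n : ℕ => (Z1 * V') ^ n * X * ((Z1 * V') ^ n)ᵀ)
      ((Ring.inverse (1 - Tm d q Z1 V')) X) := by
  have hs : Summable fun n : ℕ => (Tm d q Z1 V') ^ n := Summable.of_norm hsum
  rw [ring_inverse_one_sub hsum]
  have h1 := hs.hasSum.mapL (ContinuousLinearMap.apply ℝ (Matrix (Fin d) (Fin d) ℝ) X)
  simp only [ContinuousLinearMap.apply_apply, tm_pow_apply] at h1 ⊢
  exact h1

lemma tmSt_tsum_apply (V' : Matrix (Fin q) (Fin d) ℝ)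
    (hsum : Summable fun n : ℕ => ‖(TmSt d q Z1 V') ^ n‖)
    (X : Matrix (Fin d) (Fin d) ℝ) :
    HasSum (fun n : ℕ => ((Z1 * V') ^ n)ᵀ * X * (Z1 * V') ^ n)
      ((Ring.inverse (1 - TmSt d q Z1 V')) X) := by
  have hs : Summable fun n : ℕ => (TmSt d q Z1 V') ^ n := Summable.of_norm hsum
  rw [ring_inverse_one_sub hsum]
  have h1 := hs.hasSum.mapL (ContinuousLinearMap.apply ℝ (Matrix (Fin d) (Fin d) ℝ) X)
  simp only [ContinuousLinearMap.apply_apply, tmSt_pow_apply] at h1 ⊢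
  exact h1

lemma clSigma_eq_inv (V' : Matrix (Fin q) (Fin d) ℝ)
    (hsum : Summable fun n : ℕ => ‖(Tm d q Z1 V') ^ n‖) :
    clSigma d q Z1 V' = (Ring.inverse (1 - Tm d q Z1 V')) 1 := by
  have h := tm_tsum_apply d q Z1 V' hsum 1
  rw [clSigma]
  have := h.tsum_eq
  simp only [Matrix.mul_one] at this
  exact this

lemma clP_eq_inv (V' : Matrix (Fin q) (Fin d) ℝ)
    (hsum : Summable fun n : ℕ => ‖(TmSt d q Z1 V') ^ n‖) :
    clP m d q Ubar Z1 Q R V' =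
      (Ring.inverse (1 - TmSt d q Z1 V'))
        (Q + V'ᵀ * Ubarᵀ * R * Ubar * V') := by
  have h := tmSt_tsum_apply d q Z1 V' hsum (Q + V'ᵀ * Ubarᵀ * R * Ubar * V')
  rw [clP, ← h.tsum_eq]
  congr 1
  funext k
  rw [Matrix.transpose_pow]

lemma clSigma_lyap (V' : Matrix (Fin q) (Fin d) ℝ)
    (hsum : Summable fun n : ℕ => ‖(Tm d q Z1 V') ^ n‖) :
    clSigma d q Z1 V' = 1 + Z1 * V' * clSigma d q Z1 V' * V'ᵀ * Z1ᵀ := by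
  set A := Z1 * V' with hA
  have h := tm_tsum_apply d q Z1 V' hsum 1
  have hsf : Summable fun n : ℕ => A ^ n * (A ^ n)ᵀ := by
    have := h.summable
    simp only [Matrix.mul_one] at this
    exact this
  have hstep : ∀ n : ℕ, A ^ (n + 1) * (A ^ (n + 1))ᵀ
      = (Tm d q Z1 V') (A ^ n * (A ^ n)ᵀ) := by
    intro n
    rw [Tm, sandL_apply, ← hA, pow_succ' A n, Matrix.transpose_mul]
    simp [Matrix.mul_assoc]
  have hshift : ∑' n : ℕ, A ^ (n + 1) * (A ^ (n + 1))ᵀ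
      = (Tm d q Z1 V') (clSigma d q Z1 V') := by
    have h2 := (hsf.hasSum.mapL (Tm d q Z1 V')).tsum_eq
    calc ∑' n : ℕ, A ^ (n + 1) * (A ^ (n + 1))ᵀ
        = ∑' n : ℕ, (Tm d q Z1 V') (A ^ n * (A ^ n)ᵀ) := by
          congr 1; funext n; exact hstep n
      _ = (Tm d q Z1 V') (∑' n : ℕ, A ^ n * (A ^ n)ᵀ) := h2
      _ = (Tm d q Z1 V') (clSigma d q Z1 V') := rfl
  calc clSigma d q Z1 V' = ∑' n : ℕ, A ^ n * (A ^ n)ᵀ := rfl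
    _ = A ^ 0 * (A ^ 0)ᵀ + ∑' n : ℕ, A ^ (n + 1) * (A ^ (n + 1))ᵀ :=
        hsf.tsum_eq_zero_add
    _ = 1 + (Tm d q Z1 V') (clSigma d q Z1 V') := by
        rw [hshift]; simp
    _ = 1 + Z1 * V' * clSigma d q Z1 V' * V'ᵀ * Z1ᵀ := by
        rw [Tm, sandL_apply, ← hA, Matrix.transpose_mul]
        simp [Matrix.mul_assoc]

lemma clP_lyap (V' : Matrix (Fin q) (Fin d) ℝ)
    (hsum : Summable fun n : ℕ => ‖(TmSt d q Z1 V') ^ n‖) :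
    clP m d q Ubar Z1 Q R V' =
      Q + V'ᵀ * Ubarᵀ * R * Ubar * V' +
        V'ᵀ * Z1ᵀ * clP m d q Ubar Z1 Q R V' * Z1 * V' := by
  set A := Z1 * V' with hA
  set W := Q + V'ᵀ * Ubarᵀ * R * Ubar * V' with hW
  have h := tmSt_tsum_apply d q Z1 V' hsum W
  have hsf : Summable fun n : ℕ => (A ^ n)ᵀ * W * A ^ n := h.summable
  have hclP : clP m d q Ubar Z1 Q R V' = ∑' n : ℕ, (A ^ n)ᵀ * W * A ^ n := by
    rw [clP]
    congr 1; funext n; rw [Matrix.transpose_pow]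
  have hstep : ∀ n : ℕ, (A ^ (n + 1))ᵀ * W * A ^ (n + 1)
      = (TmSt d q Z1 V') ((A ^ n)ᵀ * W * A ^ n) := by
    intro n
    rw [TmSt, sandL_apply, ← hA,
      show (A ^ (n + 1))ᵀ = Aᵀ * (A ^ n)ᵀ from by rw [pow_succ, Matrix.transpose_mul],
      pow_succ A n]
    simp [Matrix.mul_assoc]
  have hshift : ∑' n : ℕ, (A ^ (n + 1))ᵀ * W * A ^ (n + 1)
      = (TmSt d q Z1 V') (clP m d q Ubar Z1 Q R V') := by
    have h2 := (hsf.hasSum.mapL (TmSt d q Z1 V')).tsum_eq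
    calc ∑' n : ℕ, (A ^ (n + 1))ᵀ * W * A ^ (n + 1)
        = ∑' n : ℕ, (TmSt d q Z1 V') ((A ^ n)ᵀ * W * A ^ n) := by
          congr 1; funext n; exact hstep n
      _ = (TmSt d q Z1 V') (∑' n : ℕ, (A ^ n)ᵀ * W * A ^ n) := h2
      _ = _ := by rw [← hclP]
  calc clP m d q Ubar Z1 Q R V' = ∑' n : ℕ, (A ^ n)ᵀ * W * A ^ n := hclP
    _ = (A ^ 0)ᵀ * W * A ^ 0 + ∑' n : ℕ, (A ^ (n + 1))ᵀ * W * A ^ (n + 1) :=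
        hsf.tsum_eq_zero_add
    _ = W + (TmSt d q Z1 V') (clP m d q Ubar Z1 Q R V') := by
        rw [hshift]; simp
    _ = _ := by
        rw [TmSt, sandL_apply, ← hA, Matrix.transpose_mul, hW]
        simp [Matrix.mul_assoc]
        rfl

end main

noncomputable def traceCLM (d : ℕ) : Matrix (Fin d) (Fin d) ℝ →L[ℝ] ℝ :=
  LinearMap.toContinuousLinearMap (Matrix.traceLinearMap (Fin d) ℝ ℝ)

@[simp] lemma traceCLM_apply (d : ℕ) (X : Matrix (Fin d) (Fin d) ℝ) :
    traceCLM d X = X.trace := rfl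

noncomputable def transposeCLM (d : ℕ) :
    Matrix (Fin d) (Fin d) ℝ →L[ℝ] Matrix (Fin d) (Fin d) ℝ :=
  LinearMap.toContinuousLinearMap
    ((Matrix.transposeLinearEquiv (Fin d) (Fin d) ℝ ℝ).toLinearMap)

@[simp] lemma transposeCLM_apply (d : ℕ) (X : Matrix (Fin d) (Fin d) ℝ) :
    transposeCLM d X = Xᵀ := rfl

section main2
variable (m d q : ℕ)
  (Ubar : Matrix (Fin m) (Fin q) ℝ) (Z1 : Matrix (Fin d) (Fin q) ℝ)
  (Q : Matrix (Fin d) (Fin d) ℝ)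
  (R : Matrix (Fin m) (Fin m) ℝ)

lemma clSigma_symm (V' : Matrix (Fin q) (Fin d) ℝ)
    (hsum : Summable fun n : ℕ => ‖(Tm d q Z1 V') ^ n‖) :
    (clSigma d q Z1 V')ᵀ = clSigma d q Z1 V' := by
  set A := Z1 * V' with hA
  have h := tm_tsum_apply d q Z1 V' hsum 1
  have h1 : HasSum (fun n : ℕ => A ^ n * (A ^ n)ᵀ) (clSigma d q Z1 V') := by
    have h' := h
    simp only [Matrix.mul_one] at h'
    rw [clSigma_eq_inv d q Z1 V' hsum]
    exact h'
  have h2 := h1.mapL (transposeCLM d)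
  simp only [transposeCLM_apply, Matrix.transpose_mul, Matrix.transpose_transpose] at h2
  exact h2.unique h1

lemma W_symm (V' : Matrix (Fin q) (Fin d) ℝ) (hQ : Qᵀ = Q) (hR : Rᵀ = R) :
    (Q + V'ᵀ * Ubarᵀ * R * Ubar * V')ᵀ = Q + V'ᵀ * Ubarᵀ * R * Ubar * V' := by
  simp [Matrix.transpose_add, Matrix.transpose_mul, hQ, hR, Matrix.mul_assoc]

lemma clP_symm (V' : Matrix (Fin q) (Fin d) ℝ) (hQ : Qᵀ = Q) (hR : Rᵀ = R)
    (hsum : Summable fun n : ℕ => ‖(TmSt d q Z1 V') ^ n‖) :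
    (clP m d q Ubar Z1 Q R V')ᵀ = clP m d q Ubar Z1 Q R V' := by
  set A := Z1 * V' with hA
  set W := Q + V'ᵀ * Ubarᵀ * R * Ubar * V' with hW
  have h := tmSt_tsum_apply d q Z1 V' hsum W
  have h1 : HasSum (fun n : ℕ => (A ^ n)ᵀ * W * A ^ n) (clP m d q Ubar Z1 Q R V') := by
    rw [clP_eq_inv m d q Ubar Z1 Q R V' hsum]
    exact h
  have h2 := h1.mapL (transposeCLM d)
  simp only [transposeCLM_apply, Matrix.transpose_mul, Matrix.transpose_transpose] at h2
  have hWs : Wᵀ = W := W_symm m d q Ubar Q R V' hQ hR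
  have h3 : HasSum (fun n : ℕ => (A ^ n)ᵀ * W * A ^ n) ((clP m d q Ubar Z1 Q R V')ᵀ) := by
    refine HasSum.congr_fun h2 ?_
    intro n
    rw [hWs, Matrix.mul_assoc]
  exact h3.unique h1

lemma trace_key (V' : Matrix (Fin q) (Fin d) ℝ)
    (hsumT : Summable fun n : ℕ => ‖(Tm d q Z1 V') ^ n‖)
    (hsumSt : Summable fun n : ℕ => ‖(TmSt d q Z1 V') ^ n‖)
    (X : Matrix (Fin d) (Fin d) ℝ) :
    ((Q + V'ᵀ * Ubarᵀ * R * Ubar * V') *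
        ((Ring.inverse (1 - Tm d q Z1 V')) X)).trace
      = (clP m d q Ubar Z1 Q R V' * X).trace := by
  set A := Z1 * V' with hA
  set W := Q + V'ᵀ * Ubarᵀ * R * Ubar * V' with hW
  have h1 := tm_tsum_apply d q Z1 V' hsumT X
  have h2 := tmSt_tsum_apply d q Z1 V' hsumSt W
  have φ : Matrix (Fin d) (Fin d) ℝ →L[ℝ] ℝ :=
    (traceCLM d).comp (ContinuousLinearMap.mul ℝ (Matrix (Fin d) (Fin d) ℝ) W)
  have h3 := h1.mapL ((traceCLM d).comp
    (ContinuousLinearMap.mul ℝ (Matrix (Fin d) (Fin d) ℝ) W))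
  have h4 := h2.mapL ((traceCLM d).comp
    (((ContinuousLinearMap.mul ℝ (Matrix (Fin d) (Fin d) ℝ)).flip) X))
  simp only [ContinuousLinearMap.comp_apply, ContinuousLinearMap.mul_apply',
    ContinuousLinearMap.flip_apply, traceCLM_apply] at h3 h4
  rw [clP_eq_inv m d q Ubar Z1 Q R V' hsumSt]
  refine HasSum.unique ?_ h4
  refine HasSum.congr_fun h3 ?_
  intro n
  calc (((Z1 * V') ^ n)ᵀ * W * (Z1 * V') ^ n * X).trace
      = (((Z1 * V') ^ n)ᵀ * (W * ((Z1 * V') ^ n * X))).trace := by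
        simp [Matrix.mul_assoc]
    _ = ((W * ((Z1 * V') ^ n * X)) * ((Z1 * V') ^ n)ᵀ).trace := by
        rw [Matrix.trace_mul_comm]
    _ = (W * ((Z1 * V') ^ n * X * ((Z1 * V') ^ n)ᵀ)).trace := by
        simp [Matrix.mul_assoc]

noncomputable def bTmap :
    Matrix (Fin q) (Fin d) ℝ →ₗ[ℝ] Matrix (Fin q) (Fin d) ℝ →ₗ[ℝ]
      (Matrix (Fin d) (Fin d) ℝ →L[ℝ] Matrix (Fin d) (Fin d) ℝ) :=
  LinearMap.mk₂ ℝ (fun V₁ V₂ => sandL d (Z1 * V₁) (Z1 * V₂)ᵀ)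
    (by intro V₁ V₁' V₂; ext X
        simp [Matrix.mul_add, Matrix.add_mul])
    (by intro c V₁ V₂; ext X
        simp [Matrix.mul_smul, Matrix.smul_mul])
    (by intro V₁ V₂ V₂'; ext X
        simp [Matrix.mul_add, Matrix.add_mul, Matrix.transpose_add])
    (by intro c V₁ V₂; ext X
        simp [Matrix.mul_smul, Matrix.smul_mul, Matrix.transpose_smul])

noncomputable def bWmap :
    Matrix (Fin q) (Fin d) ℝ →ₗ[ℝ] Matrix (Fin q) (Fin d) ℝ →ₗ[ℝ]
      Matrix (Fin d) (Fin d) ℝ :=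
  LinearMap.mk₂ ℝ (fun V₁ V₂ => V₁ᵀ * Ubarᵀ * R * Ubar * V₂)
    (by intro V₁ V₁' V₂
        simp [Matrix.transpose_add, Matrix.add_mul])
    (by intro c V₁ V₂
        simp [Matrix.transpose_smul, Matrix.smul_mul])
    (by intro V₁ V₂ V₂'
        simp [Matrix.mul_add])
    (by intro c V₁ V₂
        simp [Matrix.mul_smul])

lemma hasFDerivAt_Tm (V : Matrix (Fin q) (Fin d) ℝ) :
    HasFDerivAt (Tm d q Z1)
      (LinearMap.toContinuousLinearMap
        (bTmap d q Z1 V + (bTmap d q Z1).flip V)) V :=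
  hasFDerivAt_quadratic (bTmap d q Z1) V

lemma hasFDerivAt_Wm (V : Matrix (Fin q) (Fin d) ℝ) :
    HasFDerivAt (fun V' => Q + V'ᵀ * Ubarᵀ * R * Ubar * V')
      (LinearMap.toContinuousLinearMap
        (bWmap m d q Ubar R V + (bWmap m d q Ubar R).flip V)) V :=
  (hasFDerivAt_quadratic (bWmap m d q Ubar R) V).const_add Q

end main2

theorem gradient_of_covariance_parameterized_LQR_cost
    (m d q : ℕ)
    (Ubar : Matrix (Fin m) (Fin q) ℝ) (Z1 : Matrix (Fin d) (Fin q) ℝ)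
    (Q : Matrix (Fin d) (Fin d) ℝ) (hQ : Qᵀ = Q)
    (R : Matrix (Fin m) (Fin m) ℝ) (hR : Rᵀ = R)
    (V : Matrix (Fin q) (Fin d) ℝ)
    (ρV : ℝ) (hρ : ρV < 1)
    (hlim : Tendsto (fun k : ℕ => ‖(Z1 * V) ^ k‖ ^ ((k : ℝ)⁻¹)) atTop (𝓝 ρV)) :
    ∃ f : Matrix (Fin q) (Fin d) ℝ →L[ℝ] ℝ,
      HasFDerivAt (Jcost m d q Ubar Z1 Q R) f V ∧
      (∀ Δ : Matrix (Fin q) (Fin d) ℝ,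
        f Δ =
          Matrix.trace
            (((2 : ℝ) •
                ((Ubarᵀ * R * Ubar + Z1ᵀ * clP m d q Ubar Z1 Q R V * Z1) * V *
                  clSigma d q Z1 V))ᵀ * Δ)) ∧
      clSigma d q Z1 V =
        1 + Z1 * V * clSigma d q Z1 V * Vᵀ * Z1ᵀ ∧
      clP m d q Ubar Z1 Q R V =
        Q + Vᵀ * Ubarᵀ * R * Ubar * V +
          Vᵀ * Z1ᵀ * clP m d q Ubar Z1 Q R V * Z1 * V := by
  obtain ⟨N, hN0, hTN, hStN⟩ := exists_good_N d q Z1 V ρV hρ hlim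
  have hsumT : Summable fun n : ℕ => ‖(Tm d q Z1 V) ^ n‖ := summable_pow_norm hN0 hTN
  have hsumSt : Summable fun n : ℕ => ‖(TmSt d q Z1 V) ^ n‖ := summable_pow_norm hN0 hStN
  -- eventually summable near V
  have hTcont : ContinuousAt (Tm d q Z1) V := (hasFDerivAt_Tm d q Z1 V).continuousAt
  have hevsum : ∀ᶠ V' in 𝓝 V, Summable fun n : ℕ => ‖(Tm d q Z1 V') ^ n‖ :=
    hTcont.eventually (eventually_summable hN0 hTN)
  -- the unit
  obtain ⟨u, hu, hui⟩ := unit_one_sub hsumT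
  -- derivative of inverse map
  have hinv0 := hasFDerivAt_ringInverse (𝕜 := ℝ) u
  rw [hu] at hinv0
  have hTd := hasFDerivAt_Tm d q Z1 V
  set dT := LinearMap.toContinuousLinearMap
    (bTmap d q Z1 V + (bTmap d q Z1).flip V) with hdT
  have h1m : HasFDerivAt (fun V' => (1 : Matrix (Fin d) (Fin d) ℝ →L[ℝ]
      Matrix (Fin d) (Fin d) ℝ) - Tm d q Z1 V') (-dT) V := hTd.const_sub 1
  have hinv := hinv0.comp V h1m
  have happ := ((ContinuousLinearMap.apply ℝ (Matrix (Fin d) (Fin d) ℝ)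
    (1 : Matrix (Fin d) (Fin d) ℝ)).hasFDerivAt).comp V hinv
  have hWd := hasFDerivAt_Wm m d q Ubar Q R V
  set dW := LinearMap.toContinuousLinearMap
    (bWmap m d q Ubar R V + (bWmap m d q Ubar R).flip V) with hdW
  have hmul := hWd.mul' happ
  have hJf := ((traceCLM d).hasFDerivAt).comp V hmul
  set f₀ := (traceCLM d).comp
    ((Q + Vᵀ * Ubarᵀ * R * Ubar * V) •
        ((ContinuousLinearMap.apply ℝ (Matrix (Fin d) (Fin d) ℝ)
          (1 : Matrix (Fin d) (Fin d) ℝ)).comp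
          ((-((ContinuousLinearMap.mulLeftRight ℝ _) ↑u⁻¹ ↑u⁻¹)).comp (-dT))) +
      dW.smulRight ((Ring.inverse ((1 : Matrix (Fin d) (Fin d) ℝ →L[ℝ]
        Matrix (Fin d) (Fin d) ℝ) - Tm d q Z1 V)) 1)) with hf₀
  have hJf' : HasFDerivAt (fun V' => ((Q + V'ᵀ * Ubarᵀ * R * Ubar * V') *
      ((Ring.inverse ((1 : Matrix (Fin d) (Fin d) ℝ →L[ℝ]
        Matrix (Fin d) (Fin d) ℝ) - Tm d q Z1 V')) 1)).trace) f₀ V := hJf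
  have hevJ : Jcost m d q Ubar Z1 Q R =ᶠ[𝓝 V] (fun V' =>
      ((Q + V'ᵀ * Ubarᵀ * R * Ubar * V') *
      ((Ring.inverse ((1 : Matrix (Fin d) (Fin d) ℝ →L[ℝ]
        Matrix (Fin d) (Fin d) ℝ) - Tm d q Z1 V')) 1)).trace) := by
    filter_upwards [hevsum] with V' hs'
    rw [Jcost, clSigma_eq_inv d q Z1 V' hs']
  have hJ : HasFDerivAt (Jcost m d q Ubar Z1 Q R) f₀ V :=
    hJf'.congr_of_eventuallyEq hevJ
  refine ⟨f₀, hJ, ?_, clSigma_lyap d q Z1 V hsumT, clP_lyap m d q Ubar Z1 Q R V hsumSt⟩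
  intro Δ
  have hval : f₀ Δ = ((Q + Vᵀ * Ubarᵀ * R * Ubar * V) *
      ((↑u⁻¹ : Matrix (Fin d) (Fin d) ℝ →L[ℝ] Matrix (Fin d) (Fin d) ℝ)
        ((sandL d (Z1 * V) (Z1 * Δ)ᵀ + sandL d (Z1 * Δ) (Z1 * V)ᵀ)
          ((↑u⁻¹ : Matrix (Fin d) (Fin d) ℝ →L[ℝ] Matrix (Fin d) (Fin d) ℝ) 1)))).trace
      + ((Vᵀ * Ubarᵀ * R * Ubar * Δ + Δᵀ * Ubarᵀ * R * Ubar * V) *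
          ((Ring.inverse ((1 : Matrix (Fin d) (Fin d) ℝ →L[ℝ]
            Matrix (Fin d) (Fin d) ℝ) - Tm d q Z1 V)) 1)).trace := by
    simp only [hf₀, ContinuousLinearMap.comp_apply, ContinuousLinearMap.add_apply,
      ContinuousLinearMap.smul_apply, ContinuousLinearMap.smulRight_apply,
      ContinuousLinearMap.neg_apply, ContinuousLinearMap.mulLeftRight_apply,
      traceCLM_apply, hdT, hdW,
      LinearMap.coe_toContinuousLinearMap', LinearMap.add_apply, LinearMap.flip_apply,
      LinearMap.mk₂_apply, bTmap, bWmap, neg_neg, smul_eq_mul,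
      ContinuousLinearMap.apply_apply, mul_neg, neg_mul, ContinuousLinearMap.mul_apply,
      Matrix.trace_add, Matrix.mul_add]
  -- identify ↑u⁻¹ with Ring.inverse and clSigma
  have hainv : ((u⁻¹ : (Matrix (Fin d) (Fin d) ℝ →L[ℝ] Matrix (Fin d) (Fin d) ℝ)ˣ) :
      Matrix (Fin d) (Fin d) ℝ →L[ℝ] Matrix (Fin d) (Fin d) ℝ)
      = Ring.inverse ((1 : Matrix (Fin d) (Fin d) ℝ →L[ℝ] Matrix (Fin d) (Fin d) ℝ)
        - Tm d q Z1 V) := by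
    rw [← hu, Ring.inverse_unit]
  set Sg := clSigma d q Z1 V with hSg
  set P := clP m d q Ubar Z1 Q R V with hPdef
  have hSgs : Sgᵀ = Sg := clSigma_symm d q Z1 V hsumT
  have hPs : Pᵀ = P := clP_symm m d q Ubar Z1 Q R V hQ hR hsumSt
  have ha1 : ((u⁻¹ : (Matrix (Fin d) (Fin d) ℝ →L[ℝ] Matrix (Fin d) (Fin d) ℝ)ˣ) :
      Matrix (Fin d) (Fin d) ℝ →L[ℝ] Matrix (Fin d) (Fin d) ℝ) 1 = Sg := by
    rw [hainv, hSg]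
    exact (clSigma_eq_inv d q Z1 V hsumT).symm
  rw [ha1] at hval
  simp only [ContinuousLinearMap.add_apply, sandL_apply] at hval
  rw [hainv] at hval
  have hkey := trace_key m d q Ubar Z1 Q R V hsumT hsumSt
    (Z1 * V * Sg * (Z1 * Δ)ᵀ + Z1 * Δ * Sg * (Z1 * V)ᵀ)
  rw [← hPdef] at hkey
  rw [hkey] at hval
  rw [← clSigma_eq_inv d q Z1 V hsumT, ← hSg] at hval
  simp only [Matrix.mul_add, Matrix.add_mul, Matrix.trace_add] at hval
  -- now four trace identities
  have t1 : (P * (Z1 * V * Sg * (Z1 * Δ)ᵀ)).trace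
      = (Sg * Vᵀ * Z1ᵀ * P * Z1 * Δ).trace := by
    calc (P * (Z1 * V * Sg * (Z1 * Δ)ᵀ)).trace
        = ((P * Z1 * V * Sg * Δᵀ) * Z1ᵀ).trace := by
          congr 1
          simp [Matrix.transpose_mul, Matrix.mul_assoc]
      _ = (Z1ᵀ * (P * Z1 * V * Sg * Δᵀ)).trace := Matrix.trace_mul_comm _ _
      _ = ((Z1ᵀ * P * Z1 * V * Sg) * Δᵀ).trace := by
          congr 1
          simp [Matrix.mul_assoc]
      _ = (((Z1ᵀ * P * Z1 * V * Sg) * Δᵀ)ᵀ).trace := (Matrix.trace_transpose _).symm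
      _ = (Δ * (Sg * Vᵀ * Z1ᵀ * P * Z1)).trace := by
          congr 1
          simp [Matrix.transpose_mul, Matrix.transpose_transpose, hSgs, hPs, Matrix.mul_assoc]
      _ = ((Sg * Vᵀ * Z1ᵀ * P * Z1) * Δ).trace := Matrix.trace_mul_comm _ _
      _ = (Sg * Vᵀ * Z1ᵀ * P * Z1 * Δ).trace := rfl
  have t2 : (P * (Z1 * Δ * Sg * (Z1 * V)ᵀ)).trace
      = (Sg * Vᵀ * Z1ᵀ * P * Z1 * Δ).trace := by
    calc (P * (Z1 * Δ * Sg * (Z1 * V)ᵀ)).trace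
        = ((P * Z1 * Δ) * (Sg * Vᵀ * Z1ᵀ)).trace := by
          congr 1
          simp [Matrix.transpose_mul, Matrix.mul_assoc]
      _ = ((Sg * Vᵀ * Z1ᵀ) * (P * Z1 * Δ)).trace := Matrix.trace_mul_comm _ _
      _ = (Sg * Vᵀ * Z1ᵀ * P * Z1 * Δ).trace := by
          congr 1
          simp [Matrix.mul_assoc]
  have t3 : ((Vᵀ * Ubarᵀ * R * Ubar * Δ) * Sg).trace
      = (Sg * Vᵀ * (Ubarᵀ * R * Ubar) * Δ).trace := by
    calc ((Vᵀ * Ubarᵀ * R * Ubar * Δ) * Sg).trace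
        = (Sg * (Vᵀ * Ubarᵀ * R * Ubar * Δ)).trace := Matrix.trace_mul_comm _ _
      _ = (Sg * Vᵀ * (Ubarᵀ * R * Ubar) * Δ).trace := by
          congr 1
          simp [Matrix.mul_assoc]
  have t4 : ((Δᵀ * Ubarᵀ * R * Ubar * V) * Sg).trace
      = (Sg * Vᵀ * (Ubarᵀ * R * Ubar) * Δ).trace := by
    calc ((Δᵀ * Ubarᵀ * R * Ubar * V) * Sg).trace
        = (((Δᵀ * Ubarᵀ * R * Ubar * V) * Sg)ᵀ).trace := (Matrix.trace_transpose _).symm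
      _ = (Sg * Vᵀ * (Ubarᵀ * R * Ubar) * Δ).trace := by
          congr 1
          simp [Matrix.transpose_mul, Matrix.transpose_transpose, hSgs, hR, Matrix.mul_assoc]
  have htgt : Matrix.trace
      (((2 : ℝ) • ((Ubarᵀ * R * Ubar + Z1ᵀ * P * Z1) * V * Sg))ᵀ * Δ)
      = 2 * (Sg * Vᵀ * (Ubarᵀ * R * Ubar) * Δ).trace
        + 2 * (Sg * Vᵀ * Z1ᵀ * P * Z1 * Δ).trace := by
    have h1 : (((Ubarᵀ * R * Ubar + Z1ᵀ * P * Z1) * V * Sg))ᵀ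
        = Sg * Vᵀ * (Ubarᵀ * R * Ubar) + Sg * Vᵀ * Z1ᵀ * P * Z1 := by
      simp [Matrix.transpose_mul, Matrix.transpose_add, Matrix.transpose_transpose,
        hSgs, hPs, hR, Matrix.mul_add, Matrix.mul_assoc]
    rw [Matrix.transpose_smul, h1]
    simp [Matrix.smul_mul, Matrix.trace_smul, Matrix.add_mul, Matrix.trace_add,
      mul_add, smul_eq_mul]
  rw [hval, htgt, t1, t2, t3, t4]
  ring
end
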